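/- arXiv:1501.06596 — 6 statements merged into one kernel-verified Lean document; each statement's English description precedes it below -/
import Mathlib

section
/- Let d : [0,1] → [0,∞) be an integrable function with ∫_0^1 d = 1, and let f : [0,1] → ℝ be nonnegative, increasing, continuously differentiable and log-concave (f′/f antitone on the set where f > 0), with f positive on (0,1]. Assume ∫_0^y d(x)·f(y−x) dx > 0 for every y ∈ (0,1], and for y ∈ (0,1], t ∈ [0,1] define F_y(t) = (∫_0^{min(t,y)} d(x)·f(y−x) dx)/(∫_0^y d(x)·f(y−x) dx). Then: (i) for each fixed t ∈ [0,1], the map y ↦ F_y(t) is antitone (decreasing) on (0,1]; and (ii) for all y ∈ (0,1] and t ∈ [0,1], F_y(t) ≥ ∫_0^t d(x) dx. -/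
open MeasureTheory Set intervalIntegral

lemma stmt8_int (d f : ℝ → ℝ)
    (hd_int : IntervalIntegrable d volume 0 1)
    (hf_cont : ContinuousOn f (Icc (0:ℝ) 1))
    {a b y : ℝ} (ha : 0 ≤ a) (hb : 0 ≤ b) (hay : a ≤ y) (hby : b ≤ y) (hy : y ≤ 1) :
    IntervalIntegrable (fun x => d x * f (y - x)) volume a b := by
  have hsub : uIcc a b ⊆ Icc (0:ℝ) 1 :=
    uIcc_subset_Icc ⟨ha, by linarith⟩ ⟨hb, by linarith⟩
  have hsub' : uIcc a b ⊆ Icc (0:ℝ) y :=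
    uIcc_subset_Icc ⟨ha, hay⟩ ⟨hb, hby⟩
  refine (hd_int.mono_set ?_).mul_continuousOn ?_
  · rwa [uIcc_of_le (zero_le_one' ℝ)]
  · apply hf_cont.comp ((continuous_const.sub continuous_id).continuousOn)
    intro x hx
    have hx' := hsub' hx
    show y - x ∈ Icc (0:ℝ) 1
    constructor <;> simp <;> linarith [hx'.1, hx'.2]

lemma stmt8_key (f : ℝ → ℝ)
    (hf_nonneg : ∀ t ∈ Icc (0:ℝ) 1, 0 ≤ f t)
    (hf_mono : MonotoneOn f (Icc (0:ℝ) 1))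
    (hf_C1 : ContDiffOn ℝ 1 f (Icc (0:ℝ) 1))
    (hf_logconcave : AntitoneOn (fun t => derivWithin f (Icc (0:ℝ) 1) t / f t)
      (Icc (0:ℝ) 1 ∩ {t | 0 < f t}))
    {u v δ : ℝ} (hu : 0 ≤ u) (huv : u ≤ v) (hδ : 0 ≤ δ) (hv1 : v + δ ≤ 1) :
    f (v + δ) * f u ≤ f (u + δ) * f v := by
  have huI : u ∈ Icc (0:ℝ) 1 := ⟨hu, by linarith⟩
  have hvI : v ∈ Icc (0:ℝ) 1 := ⟨by linarith, by linarith⟩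
  have huδI : u + δ ∈ Icc (0:ℝ) 1 := ⟨by linarith, by linarith⟩
  have hvδI : v + δ ∈ Icc (0:ℝ) 1 := ⟨by linarith, hv1⟩
  rcases le_or_gt (f u) 0 with hfu | hfu
  · have hfu0 : f u = 0 := le_antisymm hfu (hf_nonneg u huI)
    rw [hfu0, mul_zero]
    exact mul_nonneg (hf_nonneg _ huδI) (hf_nonneg _ hvI)
  have hpos : ∀ x ∈ Icc u 1, 0 < f x := by
    intro x hx
    exact lt_of_lt_of_le hfu (hf_mono huI ⟨hu.trans hx.1, hx.2⟩ hx.1)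
  set g : ℝ → ℝ := fun x => Real.log (f x) with hg
  have hgc : ConcaveOn ℝ (Icc u 1) g := by
    apply AntitoneOn.concaveOn_of_deriv (convex_Icc u 1)
    · exact ContinuousOn.log (hf_C1.continuousOn.mono (Icc_subset_Icc hu le_rfl))
        (fun x hx => (hpos x hx).ne')
    · rw [interior_Icc]
      intro x hx
      have hx01 : x ∈ Ioo (0:ℝ) 1 := ⟨lt_of_le_of_lt hu hx.1, hx.2⟩
      have hfd : DifferentiableAt ℝ f x :=
        (hf_C1.contDiffAt (Icc_mem_nhds hx01.1 hx01.2)).differentiableAt one_ne_zero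
      exact (hfd.log (hpos x (Ioo_subset_Icc_self hx)).ne').differentiableWithinAt
    · rw [interior_Icc]
      have hderiv : ∀ x ∈ Ioo u 1, deriv g x = derivWithin f (Icc (0:ℝ) 1) x / f x := by
        intro x hx
        have hx01 : x ∈ Ioo (0:ℝ) 1 := ⟨lt_of_le_of_lt hu hx.1, hx.2⟩
        have hmem : Icc (0:ℝ) 1 ∈ nhds x := Icc_mem_nhds hx01.1 hx01.2
        have hfd : DifferentiableAt ℝ f x :=
          (hf_C1.contDiffAt hmem).differentiableAt one_ne_zero
        have hlog : HasDerivAt g (deriv f x / f x) x :=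
          hfd.hasDerivAt.log (hpos x (Ioo_subset_Icc_self hx)).ne'
        rw [hlog.deriv, derivWithin_of_mem_nhds hmem]
      intro x1 hx1 x2 hx2 h12
      rw [hderiv x1 hx1, hderiv x2 hx2]
      exact hf_logconcave ⟨Ioo_subset_Icc_self ⟨lt_of_le_of_lt hu hx1.1, hx1.2⟩,
          hpos x1 (Ioo_subset_Icc_self hx1)⟩
        ⟨Ioo_subset_Icc_self ⟨lt_of_le_of_lt hu hx2.1, hx2.2⟩,
          hpos x2 (Ioo_subset_Icc_self hx2)⟩ h12
  rcases eq_or_lt_of_le (show u ≤ v + δ by linarith) with heq | hlt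
  · have hveq : v = u := le_antisymm (by linarith) huv
    have hδ0 : δ = 0 := by linarith
    subst hveq; rw [hδ0, add_zero, mul_comm]
  · set lam : ℝ := δ / (v + δ - u) with hlam
    have hd0 : (0:ℝ) < v + δ - u := by linarith
    have hlam0 : 0 ≤ lam := div_nonneg hδ hd0.le
    have hlam1 : lam ≤ 1 := by
      rw [hlam, div_le_one hd0]; linarith
    have hL : lam * (v + δ - u) = δ := div_mul_cancel₀ δ hd0.ne'
    have hmu : u ∈ Icc u 1 := ⟨le_rfl, by linarith⟩
    have hmvδ : v + δ ∈ Icc u 1 := ⟨by linarith, hv1⟩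
    have h1 := hgc.2 hmu hmvδ (by linarith : (0:ℝ) ≤ 1 - lam) hlam0 (by ring)
    have h2 := hgc.2 hmu hmvδ hlam0 (by linarith : (0:ℝ) ≤ 1 - lam) (by ring)
    have e1 : (1 - lam) • u + lam • (v + δ) = u + δ := by
      simp only [smul_eq_mul]; linear_combination hL
    have e2 : lam • u + (1 - lam) • (v + δ) = v := by
      simp only [smul_eq_mul]; linear_combination -hL
    rw [e1] at h1
    rw [e2] at h2
    simp only [smul_eq_mul] at h1 h2
    have hsum : Real.log (f (v + δ)) + Real.log (f u) ≤
        Real.log (f (u + δ)) + Real.log (f v) := by linarith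
    have p1 : 0 < f (v + δ) := hpos _ hmvδ
    have p2 : 0 < f u := hfu
    have p3 : 0 < f (u + δ) := hpos _ ⟨by linarith, by linarith⟩
    have p4 : 0 < f v := hpos _ ⟨huv, by linarith⟩
    calc f (v + δ) * f u = Real.exp (Real.log (f (v + δ)) + Real.log (f u)) := by
          rw [Real.exp_add, Real.exp_log p1, Real.exp_log p2]
      _ ≤ Real.exp (Real.log (f (u + δ)) + Real.log (f v)) := Real.exp_le_exp.mpr hsum
      _ = f (u + δ) * f v := by rw [Real.exp_add, Real.exp_log p3, Real.exp_log p4]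

/-- Monotonicity of the conditional cdf `F_y` of a lower particle given
its right upper neighbour at `y`, and the bound `F_y(t) ≥ ∫_0^t d`, for a log-concave
increasing interaction density `f` and a probability density `d`. -/
theorem stmt8 (d f : ℝ → ℝ)
    (hd_int : IntervalIntegrable d volume 0 1)
    (hd_nonneg : ∀ x ∈ Icc (0:ℝ) 1, 0 ≤ d x)
    (hd_one : (∫ x in (0:ℝ)..1, d x) = 1)
    (hf_nonneg : ∀ t ∈ Icc (0:ℝ) 1, 0 ≤ f t)
    (hf_mono : MonotoneOn f (Icc (0:ℝ) 1))
    (hf_C1 : ContDiffOn ℝ 1 f (Icc (0:ℝ) 1))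
    (hf_logconcave : AntitoneOn (fun t => derivWithin f (Icc (0:ℝ) 1) t / f t)
      (Icc (0:ℝ) 1 ∩ {t | 0 < f t}))
    (hf_pos : ∀ t ∈ Ioc (0:ℝ) 1, 0 < f t)
    (hden_pos : ∀ y ∈ Ioc (0:ℝ) 1, 0 < ∫ x in (0:ℝ)..y, d x * f (y - x)) :
    (∀ t ∈ Icc (0:ℝ) 1,
      AntitoneOn (fun y =>
        (∫ x in (0:ℝ)..(min t y), d x * f (y - x)) / (∫ x in (0:ℝ)..y, d x * f (y - x)))
        (Ioc (0:ℝ) 1)) ∧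
    (∀ y ∈ Ioc (0:ℝ) 1, ∀ t ∈ Icc (0:ℝ) 1,
      (∫ x in (0:ℝ)..t, d x) ≤
        (∫ x in (0:ℝ)..(min t y), d x * f (y - x)) / (∫ x in (0:ℝ)..y, d x * f (y - x))) := by
  have hf_cont : ContinuousOn f (Icc (0:ℝ) 1) := hf_C1.continuousOn
  have hptnn : ∀ y : ℝ, y ≤ 1 → ∀ x : ℝ, 0 ≤ x → x ≤ y → 0 ≤ d x * f (y - x) := by
    intro y hy x hx hxy
    exact mul_nonneg (hd_nonneg x ⟨hx, by linarith⟩) (hf_nonneg _ ⟨by linarith, by linarith⟩)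
  have hIntnn : ∀ y a b : ℝ, 0 ≤ a → a ≤ b → b ≤ y → y ≤ 1 →
      0 ≤ ∫ x in a..b, d x * f (y - x) := by
    intro y a b ha hab hby hy
    exact intervalIntegral.integral_nonneg hab
      (fun x hx => hptnn y hy x (ha.trans hx.1) (hx.2.trans hby))
  have hdnn : ∀ a b : ℝ, 0 ≤ a → a ≤ b → b ≤ 1 → 0 ≤ ∫ x in a..b, d x :=
    fun a b ha hab hb => intervalIntegral.integral_nonneg hab
      (fun x hx => hd_nonneg x ⟨ha.trans hx.1, hx.2.trans hb⟩)
  have hdab : ∀ a b : ℝ, 0 ≤ a → 0 ≤ b → a ≤ 1 → b ≤ 1 →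
      IntervalIntegrable d volume a b := by
    intro a b ha hb ha1 hb1
    apply hd_int.mono_set
    rw [uIcc_of_le (zero_le_one' ℝ)]
    exact uIcc_subset_Icc ⟨ha, ha1⟩ ⟨hb, hb1⟩
  constructor
  · -- part (i): antitonicity in y
    intro t ht y1 hy1 y2 hy2 h12
    have ht0 := ht.1
    have ht1 := ht.2
    have hy10 := hy1.1
    have hy11 := hy1.2
    have hy20 := hy2.1
    have hy21 := hy2.2
    have hD1 := hden_pos y1 hy1
    have hD2 := hden_pos y2 hy2
    dsimp only
    by_cases hty : y1 ≤ t
    · rw [min_eq_right hty, div_self hD1.ne', div_le_one hD2]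
      have hm0 : 0 ≤ min t y2 := le_min ht.1 hy2.1.le
      have hmy : min t y2 ≤ y2 := min_le_right _ _
      have hsplit : (∫ x in (0:ℝ)..(min t y2), d x * f (y2 - x))
            + ∫ x in (min t y2)..y2, d x * f (y2 - x)
          = ∫ x in (0:ℝ)..y2, d x * f (y2 - x) :=
        integral_add_adjacent_intervals
          (stmt8_int d f hd_int hf_cont le_rfl hm0 hy2.1.le hmy hy2.2)
          (stmt8_int d f hd_int hf_cont hm0 hy2.1.le hmy le_rfl hy2.2)
      have h2 : 0 ≤ ∫ x in (min t y2)..y2, d x * f (y2 - x) :=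
        hIntnn y2 _ _ hm0 hmy le_rfl hy2.2
      linarith
    · push_neg at hty
      have hty1 : t ≤ y1 := hty.le
      have hty2 : t ≤ y2 := hty1.trans h12
      rw [min_eq_left hty1, min_eq_left hty2, div_le_div_iff₀ hD2 hD1]
      set p := f (y1 - t) with hp_def
      set q := f (y2 - t) with hq_def
      have hp : 0 < p := hf_pos _ ⟨by linarith, by linarith⟩
      have hq0 : 0 ≤ q := hf_nonneg _ ⟨by linarith, by linarith⟩
      set N1 := ∫ x in (0:ℝ)..t, d x * f (y1 - x) with hN1_def
      set N2 := ∫ x in (0:ℝ)..t, d x * f (y2 - x) with hN2_def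
      set M1 := ∫ x in t..y1, d x * f (y1 - x) with hM1_def
      set M2 := ∫ x in t..y1, d x * f (y2 - x) with hM2_def
      set L2 := ∫ x in y1..y2, d x * f (y2 - x) with hL2_def
      have i1 := stmt8_int d f hd_int hf_cont (y := y1) le_rfl ht.1 hy1.1.le hty1 hy1.2
      have i2 := stmt8_int d f hd_int hf_cont (y := y2) le_rfl ht.1 hy2.1.le hty2 hy2.2
      have i3 := stmt8_int d f hd_int hf_cont (y := y1) ht.1 hy1.1.le hty1 le_rfl hy1.2
      have i4 := stmt8_int d f hd_int hf_cont (y := y2) ht.1 hy1.1.le hty2 (by linarith) hy2.2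
      have i5 := stmt8_int d f hd_int hf_cont (y := y2) hy1.1.le hy2.1.le (by linarith) le_rfl
        hy2.2
      have hD1eq : (∫ x in (0:ℝ)..y1, d x * f (y1 - x)) = N1 + M1 :=
        (integral_add_adjacent_intervals i1 i3).symm
      have hD2eq : (∫ x in (0:ℝ)..y2, d x * f (y2 - x)) = N2 + M2 + L2 := by
        rw [hN2_def, hM2_def, hL2_def, integral_add_adjacent_intervals i2 i4,
          integral_add_adjacent_intervals (i2.trans i4) i5]
      have hka : N2 * p ≤ N1 * q := by
        rw [hN1_def, hN2_def, ← intervalIntegral.integral_mul_const,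
          ← intervalIntegral.integral_mul_const]
        apply integral_mono_on ht.1 (i2.mul_const p) (i1.mul_const q)
        intro x hx
        have hx1 := hx.1
        have hx2 := hx.2
        have hdx : 0 ≤ d x := hd_nonneg x ⟨hx.1, by linarith [hx.2]⟩
        have hkey := stmt8_key f hf_nonneg hf_mono hf_C1 hf_logconcave
          (u := y1 - t) (v := y1 - x) (δ := y2 - y1)
          (by linarith) (by linarith [hx.2]) (by linarith) (by linarith [hx.1])
        rw [show y1 - x + (y2 - y1) = y2 - x by ring,
          show y1 - t + (y2 - y1) = y2 - t by ring, ← hp_def, ← hq_def] at hkey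
        nlinarith [mul_le_mul_of_nonneg_left hkey hdx]
      have hkb : M1 * q ≤ M2 * p := by
        rw [hM1_def, hM2_def, ← intervalIntegral.integral_mul_const,
          ← intervalIntegral.integral_mul_const]
        apply integral_mono_on hty1 (i3.mul_const q) (i4.mul_const p)
        intro x hx
        have hx1 := hx.1
        have hx2 := hx.2
        have hdx : 0 ≤ d x := hd_nonneg x ⟨by linarith [hx.1], by linarith [hx.2]⟩
        have hkey := stmt8_key f hf_nonneg hf_mono hf_C1 hf_logconcave
          (u := y1 - x) (v := y1 - t) (δ := y2 - y1)
          (by linarith [hx.2]) (by linarith [hx.1]) (by linarith) (by linarith)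
        rw [show y1 - t + (y2 - y1) = y2 - t by ring,
          show y1 - x + (y2 - y1) = y2 - x by ring, ← hp_def, ← hq_def] at hkey
        nlinarith [mul_le_mul_of_nonneg_left hkey hdx]
      have hN1n : 0 ≤ N1 := hIntnn y1 0 t le_rfl ht.1 hty1 hy1.2
      have hN2n : 0 ≤ N2 := hIntnn y2 0 t le_rfl ht.1 hty2 hy2.2
      have hM1n : 0 ≤ M1 := hIntnn y1 t y1 ht.1 hty1 le_rfl hy1.2
      have hM2n : 0 ≤ M2 := by
        rw [hM2_def]
        apply intervalIntegral.integral_nonneg hty1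
        intro x hx
        exact hptnn y2 hy2.2 x (ht.1.trans hx.1) (by linarith [hx.2])
      have hL2n : 0 ≤ L2 := hIntnn y2 y1 y2 hy1.1.le h12 le_rfl hy2.2
      have hc : N2 * M1 ≤ N1 * M2 := by
        have h1 : p * (N2 * M1) ≤ p * (N1 * M2) := by
          nlinarith [mul_le_mul_of_nonneg_left hka hM1n,
            mul_le_mul_of_nonneg_left hkb hN1n]
        exact le_of_mul_le_mul_left h1 hp
      rw [hD1eq, hD2eq]
      nlinarith [hc, mul_nonneg hN1n hL2n]
  · -- part (ii)
    intro y hy t ht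
    have ht0 := ht.1
    have ht1 := ht.2
    have hy0 := hy.1
    have hy1' := hy.2
    have hD := hden_pos y hy
    by_cases hty : y ≤ t
    · rw [min_eq_right hty, div_self hD.ne']
      have hsplit : (∫ x in (0:ℝ)..t, d x) + ∫ x in t..1, d x = ∫ x in (0:ℝ)..1, d x :=
        integral_add_adjacent_intervals (hdab 0 t le_rfl ht.1 zero_le_one ht.2)
          (hdab t 1 ht.1 zero_le_one ht.2 le_rfl)
      have h2 := hdnn t 1 ht.1 ht.2 le_rfl
      rw [hd_one] at hsplit
      linarith
    · push_neg at hty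
      rw [min_eq_left hty.le, le_div_iff₀ hD]
      set c := f (y - t) with hc_def
      have hc : 0 < c := hf_pos _ ⟨by linarith, by linarith⟩
      set A := ∫ x in (0:ℝ)..t, d x with hA_def
      set B := ∫ x in t..y, d x with hB_def
      set N := ∫ x in (0:ℝ)..t, d x * f (y - x) with hN_def
      set M := ∫ x in t..y, d x * f (y - x) with hM_def
      have iN := stmt8_int d f hd_int hf_cont (y := y) le_rfl ht.1 hy.1.le hty.le hy.2
      have iM := stmt8_int d f hd_int hf_cont (y := y) ht.1 hy.1.le hty.le le_rfl hy.2
      have hDeq : (∫ x in (0:ℝ)..y, d x * f (y - x)) = N + M :=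
        (integral_add_adjacent_intervals iN iM).symm
      have hNc : A * c ≤ N := by
        rw [hA_def, hN_def, ← intervalIntegral.integral_mul_const]
        apply integral_mono_on ht.1 ((hdab 0 t le_rfl ht.1 zero_le_one ht.2).mul_const c) iN
        intro x hx
        have hx1 := hx.1
        have hx2 := hx.2
        have hdx : 0 ≤ d x := hd_nonneg x ⟨hx.1, hx.2.trans ht.2⟩
        have hfl : c ≤ f (y - x) := by
          rw [hc_def]
          exact hf_mono ⟨by linarith, by linarith⟩
            ⟨by linarith [hx.2], by linarith [hx.1]⟩ (by linarith [hx.2])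
        exact mul_le_mul_of_nonneg_left hfl hdx
      have hMc : M ≤ B * c := by
        rw [hB_def, hM_def, ← intervalIntegral.integral_mul_const]
        apply integral_mono_on hty.le iM ((hdab t y ht.1 hy.1.le ht.2 hy.2).mul_const c)
        intro x hx
        have hx1 := hx.1
        have hx2 := hx.2
        have hdx : 0 ≤ d x := hd_nonneg x ⟨ht.1.trans hx.1, hx.2.trans hy.2⟩
        have hfl : f (y - x) ≤ c := by
          rw [hc_def]
          exact hf_mono ⟨by linarith [hx.2], by linarith [hx.1]⟩
            ⟨by linarith, by linarith⟩ (by linarith [hx.1])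
        exact mul_le_mul_of_nonneg_left hfl hdx
      have hA : 0 ≤ A := hdnn 0 t le_rfl ht.1 ht.2
      have hB : 0 ≤ B := hdnn t y ht.1 hty.le hy.2
      have hNn : 0 ≤ N := hIntnn y 0 t le_rfl ht.1 hty.le hy.2
      have hAB : A + B ≤ 1 := by
        have h1 : A + B = ∫ x in (0:ℝ)..y, d x :=
          integral_add_adjacent_intervals (hdab 0 t le_rfl ht.1 zero_le_one ht.2)
            (hdab t y ht.1 hy.1.le ht.2 hy.2)
        have h2 : (∫ x in (0:ℝ)..y, d x) + ∫ x in y..1, d x = 1 := by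
          rw [integral_add_adjacent_intervals (hdab 0 y le_rfl hy.1.le zero_le_one hy.2)
            (hdab y 1 hy.1.le zero_le_one hy.2 le_rfl), hd_one]
        have h3 := hdnn y 1 hy.1.le hy.2 le_rfl
        linarith
      rw [hDeq]
      nlinarith [mul_le_mul_of_nonneg_left hMc hA, mul_le_mul_of_nonneg_right hNc hB,
        mul_le_mul_of_nonneg_left (show B ≤ 1 - A by linarith) hNn]
end

section
/- Let A ≥ 1, let f : [0,1] → ℝ be increasing, continuously differentiable, with 0 ≤ f ≤ A and ∫_0^1 f = 1, and let g : [0,1] → ℝ be increasing, nonnegative and continuously differentiable. Fix x₂ ∈ [0,1) and define D(x) = ∫_{max(x,x₂)}^1 f(y−x)·g(y−x₂) dy for x ∈ [0,1], and assume ∫_0^1 D(x′) dx′ > 0. Then the normalized function d(x) = D(x)/∫_0^1 D(x′) dx′ satisfies d(x) ≤ 4A² for all x ∈ [0,1]. -/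
open MeasureTheory Set intervalIntegral

lemma ae_ne_restrict (s : Set ℝ) (a : ℝ) : ∀ᵐ x ∂((volume : Measure ℝ).restrict s), x ≠ a := by
  rw [ae_iff]
  refine measure_mono_null (t := {a}) (fun x hx => not_ne_iff.1 hx) ?_
  exact le_antisymm ((Measure.restrict_le_self _).trans_eq Real.volume_singleton) zero_le

set_option maxHeartbeats 1000000 in
lemma stmt11_aux (A : ℝ) (hA : 1 ≤ A) (f g : ℝ → ℝ)
    (hf_mono : Monotone f) (hf_cont : Continuous f)
    (hf_nonneg : ∀ t, 0 ≤ f t) (hf_le : ∀ t, f t ≤ A)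
    (hf_one : (∫ t in (0:ℝ)..1, f t) = 1)
    (hg_mono : Monotone g) (hg_nonneg : ∀ t, 0 ≤ g t) (hg_cont : Continuous g)
    (c : ℝ) (hc0 : 0 ≤ c) (hc1 : c < 1)
    (hpos : 0 < ∫ x in (0:ℝ)..1, ∫ y in (max x c)..1, f (y - x) * g (y - c)) :
    ∀ x ∈ Icc (0:ℝ) 1,
      (∫ y in (max x c)..1, f (y - x) * g (y - c)) /
        (∫ x' in (0:ℝ)..1, ∫ y in (max x' c)..1, f (y - x') * g (y - c)) ≤ 4 * A ^ 2 := by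
  have hA0 : (0:ℝ) < A := lt_of_lt_of_le one_pos hA
  set G : ℝ := ∫ y in c..1, g (y - c) with hGdef
  set Z : ℝ := ∫ x' in (0:ℝ)..1, ∫ y in (max x' c)..1, f (y - x') * g (y - c) with hZdef
  -- continuity helpers
  have hcont1 : ∀ x : ℝ, Continuous fun y => f (y - x) * g (y - c) :=
    fun x => (hf_cont.comp (continuous_id.sub continuous_const)).mul
      (hg_cont.comp (continuous_id.sub continuous_const))
  have hgc : Continuous fun y => g (y - c) := hg_cont.comp (continuous_id.sub continuous_const)
  -- upper bound on D x
  have hDle : ∀ x ∈ Icc (0:ℝ) 1, (∫ y in (max x c)..1, f (y - x) * g (y - c)) ≤ A * G := by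
    intro x hx
    have hm1 : max x c ≤ 1 := max_le hx.2 hc1.le
    have hcm : c ≤ max x c := le_max_right _ _
    have step1 : (∫ y in (max x c)..1, f (y - x) * g (y - c))
        ≤ ∫ y in (max x c)..1, A * g (y - c) := by
      refine integral_mono_on hm1 ((hcont1 x).intervalIntegrable _ _)
        ((continuous_const.mul hgc).intervalIntegrable _ _) (fun y _ => ?_)
      exact mul_le_mul_of_nonneg_right (hf_le _) (hg_nonneg _)
    have step2 : (∫ y in (max x c)..1, A * g (y - c)) = A * ∫ y in (max x c)..1, g (y - c) :=
      integral_const_mul _ _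
    have step3 : (∫ y in (max x c)..1, g (y - c)) ≤ G := by
      have hsplit : (∫ y in c..(max x c), g (y - c)) + (∫ y in (max x c)..1, g (y - c)) = G :=
        integral_add_adjacent_intervals (hgc.intervalIntegrable _ _) (hgc.intervalIntegrable _ _)
      have h0 : 0 ≤ ∫ y in c..(max x c), g (y - c) :=
        integral_nonneg hcm (fun y _ => hg_nonneg _)
      linarith
    calc (∫ y in (max x c)..1, f (y - x) * g (y - c)) ≤ _ := step1
      _ = A * ∫ y in (max x c)..1, g (y - c) := step2
      _ ≤ A * G := by nlinarith
  -- Fubini: Z = ∫ y in c..1, g(y-c) * (∫_0^y f)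
  have hZeq : Z = ∫ y in c..1, g (y - c) * ∫ t in (0:ℝ)..y, f t := by
    rw [hZdef]
    set K : ℝ × ℝ → ℝ := fun p => if p.1 < p.2 then f (p.2 - p.1) * g (p.2 - c) else 0 with hKdef
    have hKmeas : Measurable K := by
      refine Measurable.ite (measurableSet_lt measurable_fst measurable_snd) ?_ measurable_const
      exact ((hf_cont.comp (continuous_snd.sub continuous_fst)).mul
        (hg_cont.comp (continuous_snd.sub continuous_const))).measurable
    have hKy : ∀ x : ℝ, (fun y => K (x, y)) = (Ioi x).indicator (fun y => f (y - x) * g (y - c)) := by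
      intro x; ext y; simp only [hKdef, indicator, mem_Ioi]
    have hKx : ∀ y : ℝ, (fun x => K (x, y)) = (Iio y).indicator (fun x => f (y - x) * g (y - c)) := by
      intro y; ext x; simp only [hKdef, indicator, mem_Iio]
    have hKyint : ∀ x a b : ℝ, IntervalIntegrable (fun y => K (x, y)) volume a b := by
      intro x a b
      rw [hKy x, intervalIntegrable_iff]
      exact (((hcont1 x).intervalIntegrable a b).def').indicator measurableSet_Ioi
    have hKxint : ∀ y a b : ℝ, IntervalIntegrable (fun x => K (x, y)) volume a b := by
      intro y a b
      rw [hKx y, intervalIntegrable_iff]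
      refine (Integrable.indicator ?_ measurableSet_Iio)
      have : Continuous fun x : ℝ => f (y - x) * g (y - c) :=
        (hf_cont.comp (continuous_const.sub continuous_id)).mul continuous_const
      exact (this.intervalIntegrable a b).def'
    have stepA : ∀ x ∈ Icc (0:ℝ) 1,
        (∫ y in (max x c)..1, f (y - x) * g (y - c)) = ∫ y in c..1, K (x, y) := by
      intro x hx
      have hm1 : max x c ≤ 1 := max_le hx.2 hc1.le
      have hcm : c ≤ max x c := le_max_right _ _
      have h1 : (∫ y in (max x c)..1, K (x, y)) = ∫ y in (max x c)..1, f (y - x) * g (y - c) := by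
        rw [integral_of_le hm1, integral_of_le hm1]
        refine setIntegral_congr_fun measurableSet_Ioc (fun y hy => ?_)
        have : x < y := lt_of_le_of_lt (le_max_left x c) hy.1
        simp only [hKdef, if_pos this]
      have h2 : (∫ y in c..(max x c), K (x, y)) = 0 := by
        rw [integral_of_le hcm]
        rw [setIntegral_congr_fun measurableSet_Ioc (g := fun _ => (0:ℝ)) (fun y hy => ?_)]
        · simp
        · rcases le_or_gt x c with h | h
          · exact absurd (hy.2.trans_lt (by rw [max_eq_right h] at hy ⊢; exact hy.1)) (lt_irrefl _)
          · have : ¬ x < y := not_lt.2 (hy.2.trans_eq (max_eq_left h.le))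
            simp only [hKdef, if_neg this]
      have := integral_add_adjacent_intervals (hKyint x c (max x c)) (hKyint x (max x c) 1)
      rw [h1, h2, zero_add] at this
      exact this
    have hZ1 : (∫ x' in (0:ℝ)..1, ∫ y in (max x' c)..1, f (y - x') * g (y - c))
        = ∫ x in (0:ℝ)..1, ∫ y in c..1, K (x, y) := by
      refine integral_congr (fun x hx => ?_)
      rw [uIcc_of_le zero_le_one] at hx
      exact stepA x hx
    rw [hZ1]
    rw [integral_of_le zero_le_one, integral_of_le hc1.le]
    simp_rw [integral_of_le hc1.le]
    haveI h1 : IsFiniteMeasure ((volume : Measure ℝ).restrict (Ioc (0:ℝ) 1)) :=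
      ⟨by rw [Measure.restrict_apply_univ]; simp⟩
    haveI h2 : IsFiniteMeasure ((volume : Measure ℝ).restrict (Ioc c 1)) :=
      ⟨by rw [Measure.restrict_apply_univ]; simp⟩
    have hint : Integrable (Function.uncurry fun x y => K (x, y))
        (((volume : Measure ℝ).restrict (Ioc (0:ℝ) 1)).prod
          ((volume : Measure ℝ).restrict (Ioc c 1))) := by
      have huncurry : (Function.uncurry fun x y => K (x, y)) = K := by
        ext p; cases p; rfl
      rw [huncurry]
      refine Integrable.mono' (integrable_const (A * g 1)) hKmeas.aestronglyMeasurable ?_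
      rw [Measure.prod_restrict]
      filter_upwards [ae_restrict_mem (measurableSet_Ioc.prod measurableSet_Ioc)] with p hp
      have hp2 : p.2 ∈ Ioc c 1 := hp.2
      have hgle : g (p.2 - c) ≤ g 1 := hg_mono (by have := hp2.2; linarith)
      simp only [hKdef]
      split_ifs with h
      · rw [Real.norm_eq_abs, abs_of_nonneg (mul_nonneg (hf_nonneg _) (hg_nonneg _))]
        calc f (p.2 - p.1) * g (p.2 - c) ≤ A * g (p.2 - c) :=
              mul_le_mul_of_nonneg_right (hf_le _) (hg_nonneg _)
          _ ≤ A * g 1 := mul_le_mul_of_nonneg_left hgle hA0.le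
      · simp [mul_nonneg hA0.le (hg_nonneg 1)]
    rw [integral_integral_swap hint]
    rw [← integral_of_le hc1.le, ← integral_of_le hc1.le]
    refine integral_congr (fun y hy => ?_)
    rw [uIcc_of_le hc1.le] at hy
    have hy0 : 0 ≤ y := hc0.trans hy.1
    have hy1 : y ≤ 1 := hy.2
    rw [← integral_of_le zero_le_one]
    have hsplit := integral_add_adjacent_intervals (hKxint y 0 y) (hKxint y y 1)
    have hB : (∫ x in y..(1:ℝ), K (x, y)) = 0 := by
      rw [integral_of_le hy1]
      rw [setIntegral_congr_fun measurableSet_Ioc (g := fun _ => (0:ℝ)) (fun x hx => ?_)]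
      · simp
      · have : ¬ x < y := not_lt.2 hx.1.le
        simp only [hKdef, if_neg this]
    have hAA : (∫ x in (0:ℝ)..y, K (x, y)) = g (y - c) * ∫ t in (0:ℝ)..y, f t := by
      have e1 : (∫ x in (0:ℝ)..y, K (x, y)) = ∫ x in (0:ℝ)..y, f (y - x) * g (y - c) := by
        rw [integral_of_le hy0, integral_of_le hy0]
        refine integral_congr_ae ?_
        filter_upwards [ae_restrict_mem measurableSet_Ioc, ae_ne_restrict (Ioc 0 y) y] with x hx hne
        have : x < y := lt_of_le_of_ne hx.2 hne
        simp only [hKdef, if_pos this]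
      rw [e1]
      rw [intervalIntegral.integral_mul_const]
      rw [integral_comp_sub_left (fun t => f t) y]
      simp [mul_comm]
    rw [← hsplit, hB, add_zero, hAA]
  -- lower bound: G ≤ 4 A Z
  have hGZ : G ≤ 4 * A * Z := by
    rw [hZeq, hGdef]
    have hFc : Continuous fun y : ℝ => ∫ t in (0:ℝ)..y, f t :=
      intervalIntegral.continuous_primitive (fun a b => hf_cont.intervalIntegrable a b) 0
    have hgFc : Continuous fun y => g (y - c) * ∫ t in (0:ℝ)..y, f t := hgc.mul hFc
    set b : ℝ := max c (1 - 1/(2*A)) with hbdef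
    have hcb : c ≤ b := le_max_left _ _
    have hb1 : b ≤ 1 := by
      refine max_le hc1.le ?_
      have h : 0 < 1/(2*A) := by positivity
      linarith
    have h1b : 1 - b ≤ 1/(2*A) := by
      have := le_max_right c (1 - 1/(2*A)); linarith
    have hb0 : 0 ≤ b := hc0.trans hcb
    have hF : ∀ y, b ≤ y → y ≤ 1 → (1:ℝ)/2 ≤ ∫ t in (0:ℝ)..y, f t := by
      intro y hby hy1
      have hsplit : (∫ t in (0:ℝ)..y, f t) + (∫ t in y..1, f t) = ∫ t in (0:ℝ)..1, f t :=
        integral_add_adjacent_intervals (hf_cont.intervalIntegrable 0 y)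
          (hf_cont.intervalIntegrable y 1)
      rw [hf_one] at hsplit
      have htail : (∫ t in y..1, f t) ≤ (1 - y) * A := by
        have : (∫ t in y..1, f t) ≤ ∫ t in y..1, A :=
          integral_mono_on hy1 (hf_cont.intervalIntegrable _ _)
            ((continuous_const : Continuous fun _ : ℝ => A).intervalIntegrable _ _)
            (fun t _ => hf_le t)
        rwa [intervalIntegral.integral_const, smul_eq_mul] at this
      have h1y : 1 - y ≤ 1/(2*A) := by linarith
      have : (1 - y) * A ≤ 1/2 := by
        rw [le_div_iff₀ (by positivity : (0:ℝ) < 2*A)] at h1y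
        nlinarith
      linarith
    have hFnonneg : ∀ y, 0 ≤ y → 0 ≤ ∫ t in (0:ℝ)..y, f t :=
      fun y hy => integral_nonneg hy (fun t _ => hf_nonneg t)
    set S : ℝ := ∫ y in c..b, g (y - c) with hSdef
    set T : ℝ := ∫ y in b..1, g (y - c) with hTdef
    have hG : (∫ y in c..1, g (y - c)) = S + T :=
      (integral_add_adjacent_intervals (hgc.intervalIntegrable _ _)
        (hgc.intervalIntegrable _ _)).symm
    have hT0 : 0 ≤ T := integral_nonneg hb1 (fun y _ => hg_nonneg _)
    have hS0 : 0 ≤ S := integral_nonneg hcb (fun y _ => hg_nonneg _)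
    have hSle : S ≤ (b - c) * g (b - c) := by
      have : S ≤ ∫ y in c..b, g (b - c) :=
        integral_mono_on hcb (hgc.intervalIntegrable _ _)
          ((continuous_const : Continuous fun _ : ℝ => g (b - c)).intervalIntegrable _ _)
          (fun y hy => hg_mono (by linarith [hy.2]))
      rwa [intervalIntegral.integral_const, smul_eq_mul] at this
    have hTge : (1 - b) * g (b - c) ≤ T := by
      have : (∫ y in b..1, g (b - c)) ≤ T :=
        integral_mono_on hb1
          ((continuous_const : Continuous fun _ : ℝ => g (b - c)).intervalIntegrable _ _)
          (hgc.intervalIntegrable _ _) (fun y hy => hg_mono (by linarith [hy.1]))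
      rwa [intervalIntegral.integral_const, smul_eq_mul] at this
    have hkey : (1 - b) * (S + T) ≤ (1 - c) * T := by
      nlinarith [mul_le_mul_of_nonneg_left hSle (by linarith : (0:ℝ) ≤ 1 - b),
        mul_le_mul_of_nonneg_left hTge (by linarith : (0:ℝ) ≤ b - c), hg_nonneg (b - c)]
    have h1b2 : 1 - c ≤ 2 * A * (1 - b) := by
      rcases le_total (1 - 1/(2*A)) c with h | h
      · have hbc : b = c := max_eq_left h
        rw [hbc]; nlinarith
      · have hbc : b = 1 - 1/(2*A) := max_eq_right h
        rw [hbc]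
        have : 2 * A * (1/(2*A)) = 1 := by field_simp
        linarith [this]
    have hGT : S + T ≤ 2 * A * T := by
      have h1c : (0:ℝ) < 1 - c := by linarith
      nlinarith [mul_le_mul_of_nonneg_right h1b2 (by linarith [hG, hS0, hT0] : (0:ℝ) ≤ S + T),
        mul_le_mul_of_nonneg_left hkey (by positivity : (0:ℝ) ≤ 2*A)]
    have hZsplit : (∫ y in c..1, g (y - c) * ∫ t in (0:ℝ)..y, f t)
        = (∫ y in c..b, g (y - c) * ∫ t in (0:ℝ)..y, f t)
          + ∫ y in b..1, g (y - c) * ∫ t in (0:ℝ)..y, f t :=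
      (integral_add_adjacent_intervals (hgFc.intervalIntegrable _ _)
        (hgFc.intervalIntegrable _ _)).symm
    have hZ1 : 0 ≤ ∫ y in c..b, g (y - c) * ∫ t in (0:ℝ)..y, f t :=
      integral_nonneg hcb (fun y hy => mul_nonneg (hg_nonneg _) (hFnonneg y (hc0.trans hy.1)))
    have hZ2 : (1/2 : ℝ) * T ≤ ∫ y in b..1, g (y - c) * ∫ t in (0:ℝ)..y, f t := by
      have : (∫ y in b..1, (1/2 : ℝ) * g (y - c)) ≤ _ :=
        integral_mono_on hb1 ((continuous_const.mul hgc).intervalIntegrable _ _)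
          (hgFc.intervalIntegrable _ _) (fun y hy => ?_)
      · rwa [intervalIntegral.integral_const_mul] at this
      · have hFy := hF y hy.1 hy.2
        have := hg_nonneg (y - c)
        nlinarith
    rw [hG]
    nlinarith [hGT, hZsplit, hZ1, hZ2, hT0, hA0]
  have hG0 : 0 ≤ G := integral_nonneg hc1.le (fun y _ => hg_nonneg _)
  intro x hx
  rw [div_le_iff₀ hpos]
  have := hDle x hx
  nlinarith [hpos, hGZ, this, hA0]

set_option maxHeartbeats 1000000 in
/-- The conditional density of the first lower particle of a sawtooth
model given the position `x₂` of the second lower particle is bounded by `4A²` when the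
first interaction density `f` is normalized and bounded by `A`. -/
theorem stmt11 (A : ℝ) (hA : 1 ≤ A) (f g : ℝ → ℝ)
    (hf_mono : MonotoneOn f (Icc (0:ℝ) 1))
    (hf_C1 : ContDiffOn ℝ 1 f (Icc (0:ℝ) 1))
    (hf_nonneg : ∀ t ∈ Icc (0:ℝ) 1, 0 ≤ f t)
    (hf_le : ∀ t ∈ Icc (0:ℝ) 1, f t ≤ A)
    (hf_one : (∫ t in (0:ℝ)..1, f t) = 1)
    (hg_mono : MonotoneOn g (Icc (0:ℝ) 1))
    (hg_nonneg : ∀ t ∈ Icc (0:ℝ) 1, 0 ≤ g t)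
    (hg_C1 : ContDiffOn ℝ 1 g (Icc (0:ℝ) 1))
    (x₂ : ℝ) (hx₂ : x₂ ∈ Ico (0:ℝ) 1)
    (hpos : 0 < ∫ x in (0:ℝ)..1, ∫ y in (max x x₂)..1, f (y - x) * g (y - x₂)) :
    ∀ x ∈ Icc (0:ℝ) 1,
      (∫ y in (max x x₂)..1, f (y - x) * g (y - x₂)) /
        (∫ x' in (0:ℝ)..1, ∫ y in (max x' x₂)..1, f (y - x') * g (y - x₂)) ≤ 4 * A ^ 2 := by
  set φ : ℝ → ℝ := fun t => max 0 (min t 1) with hφdef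
  have hφcont : Continuous φ := continuous_const.max (continuous_id.min continuous_const)
  have hφmem : ∀ t, φ t ∈ Icc (0:ℝ) 1 :=
    fun t => ⟨le_max_left _ _, max_le zero_le_one (min_le_right _ _)⟩
  have hφmono : Monotone φ := fun a b h => max_le_max le_rfl (min_le_min h le_rfl)
  have hφid : ∀ t ∈ Icc (0:ℝ) 1, φ t = t := by
    intro t ht
    simp only [hφdef]
    rw [min_eq_left ht.2, max_eq_right ht.1]
  set f' : ℝ → ℝ := fun t => f (φ t) with hf'def
  set g' : ℝ → ℝ := fun t => g (φ t) with hg'def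
  have hf'cont : Continuous f' := hf_C1.continuousOn.comp_continuous hφcont hφmem
  have hg'cont : Continuous g' := hg_C1.continuousOn.comp_continuous hφcont hφmem
  have hf'mono : Monotone f' := fun a b h => hf_mono (hφmem a) (hφmem b) (hφmono h)
  have hg'mono : Monotone g' := fun a b h => hg_mono (hφmem a) (hφmem b) (hφmono h)
  have hf'nonneg : ∀ t, 0 ≤ f' t := fun t => hf_nonneg _ (hφmem t)
  have hg'nonneg : ∀ t, 0 ≤ g' t := fun t => hg_nonneg _ (hφmem t)
  have hf'le : ∀ t, f' t ≤ A := fun t => hf_le _ (hφmem t)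
  have heqf : ∀ t ∈ Icc (0:ℝ) 1, f' t = f t := fun t ht => by
    simp only [hf'def]; rw [hφid t ht]
  have heqg : ∀ t ∈ Icc (0:ℝ) 1, g' t = g t := fun t ht => by
    simp only [hg'def]; rw [hφid t ht]
  have hf'one : (∫ t in (0:ℝ)..1, f' t) = 1 := by
    have he : (∫ t in (0:ℝ)..1, f' t) = ∫ t in (0:ℝ)..1, f t := by
      apply integral_congr
      intro t ht
      rw [uIcc_of_le zero_le_one] at ht
      exact heqf t ht
    rw [he, hf_one]
  have hcongr : ∀ x ∈ Icc (0:ℝ) 1,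
      (∫ y in (max x x₂)..1, f (y - x) * g (y - x₂))
        = ∫ y in (max x x₂)..1, f' (y - x) * g' (y - x₂) := by
    intro x hx
    have hm1 : max x x₂ ≤ 1 := max_le hx.2 hx₂.2.le
    refine integral_congr (fun y hy => ?_)
    rw [uIcc_of_le hm1] at hy
    have h1 : y - x ∈ Icc (0:ℝ) 1 := by
      constructor
      · linarith [le_max_left x x₂, hy.1]
      · have := hx.1; have := hy.2; linarith
    have h2 : y - x₂ ∈ Icc (0:ℝ) 1 := by
      constructor
      · linarith [le_max_right x x₂, hy.1]
      · have := hx₂.1; have := hy.2; linarith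
    rw [heqf _ h1, heqg _ h2]
  have hZcongr : (∫ x' in (0:ℝ)..1, ∫ y in (max x' x₂)..1, f (y - x') * g (y - x₂))
      = ∫ x' in (0:ℝ)..1, ∫ y in (max x' x₂)..1, f' (y - x') * g' (y - x₂) := by
    refine integral_congr (fun x hx => ?_)
    rw [uIcc_of_le zero_le_one] at hx
    exact hcongr x hx
  intro x hx
  rw [hcongr x hx, hZcongr]
  exact stmt11_aux A hA f' g' hf'mono hf'cont hf'nonneg hf'le hf'one hg'mono hg'nonneg hg'cont
    x₂ hx₂.1 hx₂.2 (hZcongr ▸ hpos) x hx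
end

section
/- For every sawtooth model of size n and every η ∈ (0,1), the probability under the model's law that all lower particles satisfy X_i ≥ η for i = 1,…,n+1 is at most (1−η)^{2n+1}. -/
open MeasureTheory Set
open scoped ENNReal

noncomputable section

/-- A sawtooth model of size `n`: interaction densities `f i`, `g i` on `[0,1]`,
nonnegative, monotone increasing and `C¹`. -/
structure Sawtooth (n : ℕ) where
  f : Fin n → ℝ → ℝ
  g : Fin n → ℝ → ℝ
  f_nonneg : ∀ i, ∀ t ∈ Set.Icc (0:ℝ) 1, 0 ≤ f i t
  g_nonneg : ∀ i, ∀ t ∈ Set.Icc (0:ℝ) 1, 0 ≤ g i t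
  f_mono : ∀ i, MonotoneOn (f i) (Set.Icc (0:ℝ) 1)
  g_mono : ∀ i, MonotoneOn (g i) (Set.Icc (0:ℝ) 1)
  f_smooth : ∀ i, ContDiffOn ℝ 1 (f i) (Set.Icc (0:ℝ) 1)
  g_smooth : ∀ i, ContDiffOn ℝ 1 (g i) (Set.Icc (0:ℝ) 1)

namespace Sawtooth

variable {n : ℕ}

/-- The configuration box `[0,1]^{n+1} × [0,1]^n` (lower particles `x`, upper particles `y`). -/
def box (n : ℕ) : Set ((Fin (n + 1) → ℝ) × (Fin n → ℝ)) :=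
  (Set.univ.pi fun _ => Set.Icc (0:ℝ) 1) ×ˢ (Set.univ.pi fun _ => Set.Icc (0:ℝ) 1)

/-- Unnormalized density `∏ i, 1_{x_i ≤ y_i} 1_{x_{i+1} ≤ y_i} f_i(y_i - x_i) g_i(y_i - x_{i+1})`. -/
def dens (M : Sawtooth n) (x : Fin (n + 1) → ℝ) (y : Fin n → ℝ) : ℝ :=
  ∏ i : Fin n,
    (if x i.castSucc ≤ y i ∧ x i.succ ≤ y i
      then M.f i (y i - x i.castSucc) * M.g i (y i - x i.succ) else 0)

/-- Normalizing constant (volume) of the model. -/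
def V (M : Sawtooth n) : ℝ := ∫ p in box n, dens M p.1 p.2

/-- The Gibbs law of the model on `[0,1]^{n+1} × [0,1]^n`. -/
def law (M : Sawtooth n) : Measure ((Fin (n + 1) → ℝ) × (Fin n → ℝ)) :=
  (volume.restrict (box n)).withDensity fun p => ENNReal.ofReal (dens M p.1 p.2 / M.V)

/-- Joint density of the first and last lower particles `(X_I, X_F)`. -/
def dXIXF (M : Sawtooth n) (x y : ℝ) : ℝ :=
  (∫ p in box n,
    dens M (Function.update (Function.update p.1 0 x) (Fin.last n) y) p.2) / M.V

/-- Density of the first lower particle `X_I`. -/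
def dXI (M : Sawtooth n) (x : ℝ) : ℝ := ∫ y in Icc (0:ℝ) 1, M.dXIXF x y

/-- Density of the last lower particle `X_F`. -/
def dXF (M : Sawtooth n) (y : ℝ) : ℝ := ∫ x in Icc (0:ℝ) 1, M.dXIXF x y

/-- Cdf of `X_I`. -/
def FXI (M : Sawtooth n) (t : ℝ) : ℝ := ∫ x in (0:ℝ)..t, M.dXI x

/-- Conditional cdf of `X_I` given `X_F = y`. -/
def FXIcond (M : Sawtooth n) (y t : ℝ) : ℝ :=
  (∫ x in (0:ℝ)..t, M.dXIXF x y) / M.dXF y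

/-- The model is normalized: all interaction densities integrate to `1` on `[0,1]`. -/
def Normalized (M : Sawtooth n) : Prop :=
  ∀ i, (∫ t in (0:ℝ)..1, M.f i t) = 1 ∧ (∫ t in (0:ℝ)..1, M.g i t) = 1

/-- The model is bounded by `A`. -/
def BoundedBy (M : Sawtooth n) (A : ℝ) : Prop :=
  ∀ i, (∀ t ∈ Set.Icc (0:ℝ) 1, M.f i t ≤ A) ∧ (∀ t ∈ Set.Icc (0:ℝ) 1, M.g i t ≤ A)

/-- The model is convex: all interaction densities are log-concave, i.e. their
logarithmic derivatives are antitone on the set where they are positive. -/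
def IsConvex (M : Sawtooth n) : Prop :=
  ∀ i,
    AntitoneOn (fun t => derivWithin (M.f i) (Set.Icc 0 1) t / M.f i t)
      (Set.Icc (0:ℝ) 1 ∩ {t | 0 < M.f i t}) ∧
    AntitoneOn (fun t => derivWithin (M.g i) (Set.Icc 0 1) t / M.g i t)
      (Set.Icc (0:ℝ) 1 ∩ {t | 0 < M.g i t})

end Sawtooth

/-- `Γ⁺(f)(t) = (∫_0^t f)/(∫_0^1 f)`. -/
def Gplus (f : ℝ → ℝ) (t : ℝ) : ℝ := (∫ u in (0:ℝ)..t, f u) / (∫ u in (0:ℝ)..1, f u)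

/-- `Γ⁻(f)(t) = (∫_{1-t}^1 f)/(∫_0^1 f)`. -/
def Gminus (f : ℝ → ℝ) (t : ℝ) : ℝ := (∫ u in (1 - t)..(1:ℝ), f u) / (∫ u in (0:ℝ)..1, f u)


section AuxStmt12

open Filter

variable {n : ℕ}

/-- Clamp a real number to `[0,1]`. -/
def clamp01 (t : ℝ) : ℝ := min (max t 0) 1

lemma clamp01_mem (t : ℝ) : clamp01 t ∈ Icc (0:ℝ) 1 :=
  ⟨le_min (le_max_right _ _) zero_le_one, min_le_right _ _⟩

lemma clamp01_eq {t : ℝ} (h : t ∈ Icc (0:ℝ) 1) : clamp01 t = t := by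
  simp [clamp01, max_eq_left h.1, min_eq_left h.2]

lemma continuous_clamp01 : Continuous clamp01 :=
  (continuous_id.max continuous_const).min continuous_const

/-- A globally measurable modification of the sawtooth density. -/
def dens2 (M : Sawtooth n) (p : (Fin (n + 1) → ℝ) × (Fin n → ℝ)) : ℝ :=
  ∏ i : Fin n,
    (if p.1 i.castSucc ≤ p.2 i ∧ p.1 i.succ ≤ p.2 i
      then M.f i (clamp01 (p.2 i - p.1 i.castSucc)) * M.g i (clamp01 (p.2 i - p.1 i.succ))
      else 0)

lemma dens2_nonneg (M : Sawtooth n) (p : (Fin (n + 1) → ℝ) × (Fin n → ℝ)) :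
    0 ≤ dens2 M p :=
  Finset.prod_nonneg fun i _ => by
    split_ifs with h
    · exact mul_nonneg (M.f_nonneg i _ (clamp01_mem _)) (M.g_nonneg i _ (clamp01_mem _))
    · exact le_refl 0

lemma measurable_dens2 (M : Sawtooth n) : Measurable (dens2 M) := by
  apply Finset.measurable_prod
  intro i _
  have hx1 : Measurable fun p : (Fin (n + 1) → ℝ) × (Fin n → ℝ) => p.1 i.castSucc :=
    (measurable_pi_apply _).comp measurable_fst
  have hx2 : Measurable fun p : (Fin (n + 1) → ℝ) × (Fin n → ℝ) => p.1 i.succ :=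
    (measurable_pi_apply _).comp measurable_fst
  have hy : Measurable fun p : (Fin (n + 1) → ℝ) × (Fin n → ℝ) => p.2 i :=
    (measurable_pi_apply _).comp measurable_snd
  have hf : Continuous fun t => M.f i (clamp01 t) :=
    ((M.f_smooth i).continuousOn).comp_continuous continuous_clamp01 clamp01_mem
  have hg : Continuous fun t => M.g i (clamp01 t) :=
    ((M.g_smooth i).continuousOn).comp_continuous continuous_clamp01 clamp01_mem
  exact Measurable.ite
    ((measurableSet_le hx1 hy).inter (measurableSet_le hx2 hy))
    ((hf.measurable.comp (hy.sub hx1)).mul (hg.measurable.comp (hy.sub hx2)))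
    measurable_const

lemma dens_eq_dens2 (M : Sawtooth n) {p : (Fin (n + 1) → ℝ) × (Fin n → ℝ)}
    (hp : p ∈ Sawtooth.box n) : M.dens p.1 p.2 = dens2 M p := by
  obtain ⟨hx, hy⟩ := hp
  refine Finset.prod_congr rfl fun i _ => ?_
  split_ifs with h
  · have hb1 : (0:ℝ) ≤ p.1 i.castSucc := (hx i.castSucc (Set.mem_univ _)).1
    have hb2 : (0:ℝ) ≤ p.1 i.succ := (hx i.succ (Set.mem_univ _)).1
    have hb3 : p.2 i ≤ 1 := (hy i (Set.mem_univ _)).2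
    have h1 : p.2 i - p.1 i.castSucc ∈ Icc (0:ℝ) 1 := ⟨by linarith [h.1], by linarith⟩
    have h2 : p.2 i - p.1 i.succ ∈ Icc (0:ℝ) 1 := ⟨by linarith [h.2], by linarith⟩
    rw [clamp01_eq h1, clamp01_eq h2]
  · rfl

lemma dens2_scale_le (M : Sawtooth n) {η : ℝ} (hη0 : 0 ≤ η) (hη1 : η < 1)
    {p : (Fin (n + 1) → ℝ) × (Fin n → ℝ)} (hp : p ∈ Sawtooth.box n) :
    dens2 M (fun i => η + (1 - η) * p.1 i, fun i => η + (1 - η) * p.2 i) ≤ dens2 M p := by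
  obtain ⟨hx, hy⟩ := hp
  have ha : (0:ℝ) < 1 - η := by linarith
  refine Finset.prod_le_prod (fun i _ => ?_) (fun i _ => ?_)
  · split_ifs with h
    · exact mul_nonneg (M.f_nonneg i _ (clamp01_mem _)) (M.g_nonneg i _ (clamp01_mem _))
    · exact le_refl 0
  · by_cases h : p.1 i.castSucc ≤ p.2 i ∧ p.1 i.succ ≤ p.2 i
    · have hc : (η + (1 - η) * p.1 i.castSucc ≤ η + (1 - η) * p.2 i) ∧
          (η + (1 - η) * p.1 i.succ ≤ η + (1 - η) * p.2 i) :=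
        ⟨by have := mul_le_mul_of_nonneg_left h.1 ha.le; linarith,
         by have := mul_le_mul_of_nonneg_left h.2 ha.le; linarith⟩
      rw [if_pos hc, if_pos h]
      have step : ∀ (F : ℝ → ℝ), (∀ t ∈ Icc (0:ℝ) 1, 0 ≤ F t) → MonotoneOn F (Icc (0:ℝ) 1) →
          ∀ {x : ℝ}, 0 ≤ x → x ≤ p.2 i →
          0 ≤ F (clamp01 ((η + (1 - η) * p.2 i) - (η + (1 - η) * x))) ∧
          F (clamp01 ((η + (1 - η) * p.2 i) - (η + (1 - η) * x))) ≤ F (clamp01 (p.2 i - x)) := by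
        intro F hF hFm x hx0 hxy
        have hy1 : p.2 i ≤ 1 := (hy i (Set.mem_univ i)).2
        have hd : p.2 i - x ∈ Icc (0:ℝ) 1 := ⟨by linarith, by linarith⟩
        have hd' : (η + (1 - η) * p.2 i) - (η + (1 - η) * x) = (1 - η) * (p.2 i - x) := by ring
        have hd2 : (1 - η) * (p.2 i - x) ∈ Icc (0:ℝ) 1 :=
          ⟨mul_nonneg ha.le (by linarith), by nlinarith⟩
        have hle : (1 - η) * (p.2 i - x) ≤ p.2 i - x := by nlinarith
        rw [hd', clamp01_eq hd2, clamp01_eq hd]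
        exact ⟨hF _ hd2, hFm hd2 hd hle⟩
      have s1 := step (M.f i) (M.f_nonneg i) (M.f_mono i)
        (hx i.castSucc (Set.mem_univ _)).1 h.1
      have s2 := step (M.g i) (M.g_nonneg i) (M.g_mono i)
        (hx i.succ (Set.mem_univ _)).1 h.2
      exact mul_le_mul s1.2 s2.2 s2.1 (M.f_nonneg i _ (clamp01_mem _))
    · have hc : ¬((η + (1 - η) * p.1 i.castSucc ≤ η + (1 - η) * p.2 i) ∧
          (η + (1 - η) * p.1 i.succ ≤ η + (1 - η) * p.2 i)) := by
        intro hc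
        refine h ⟨?_, ?_⟩
        · have h1 : (1 - η) * p.1 i.castSucc ≤ (1 - η) * p.2 i := by linarith [hc.1]
          exact le_of_mul_le_mul_left h1 ha
        · have h2 : (1 - η) * p.1 i.succ ≤ (1 - η) * p.2 i := by linarith [hc.2]
          exact le_of_mul_le_mul_left h2 ha
      rw [if_neg hc, if_neg h]

lemma dens2_eq_zero (M : Sawtooth n) {η : ℝ} {p : (Fin (n + 1) → ℝ) × (Fin n → ℝ)}
    (hpx : ∀ j : Fin (n + 1), η ≤ p.1 j) (i : Fin n) (hyi : p.2 i < η) :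
    dens2 M p = 0 :=
  Finset.prod_eq_zero (Finset.mem_univ i)
    (if_neg fun h => absurd h.1 (not_le.mpr (lt_of_lt_of_le hyi (hpx i.castSucc))))

end AuxStmt12

/-- In any sawtooth model the probability that all lower particles lie
above `η` is at most `(1-η)^{2n+1}`. -/
theorem stmt12 (n : ℕ) (hn : 1 ≤ n) (M : Sawtooth n) (hV : 0 < M.V)
    (η : ℝ) (hη : η ∈ Ioo (0:ℝ) 1) :
    M.law {p | ∀ i : Fin (n + 1), η ≤ p.1 i} ≤ ENNReal.ofReal ((1 - η) ^ (2 * n + 1)) := by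
  obtain ⟨hη0, hη1⟩ := hη
  have ha : (0:ℝ) < 1 - η := by linarith
  have had : (0:ℝ) < (1 - η) ^ (2 * n + 1) := pow_pos ha _
  -- basic measurability facts
  have hbox : MeasurableSet (Sawtooth.box n) :=
    (MeasurableSet.univ_pi fun _ => measurableSet_Icc).prod
      (MeasurableSet.univ_pi fun _ => measurableSet_Icc)
  have hS : MeasurableSet {p : (Fin (n + 1) → ℝ) × (Fin n → ℝ) | ∀ i : Fin (n + 1), η ≤ p.1 i} := by
    have : {p : (Fin (n + 1) → ℝ) × (Fin n → ℝ) | ∀ i : Fin (n + 1), η ≤ p.1 i}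
        = ⋂ i : Fin (n + 1), {p : (Fin (n + 1) → ℝ) × (Fin n → ℝ) | η ≤ p.1 i} := by
      ext p; simp
    rw [this]
    exact MeasurableSet.iInter fun i =>
      measurableSet_le measurable_const (measurable_fst.eval)
  set S : Set ((Fin (n + 1) → ℝ) × (Fin n → ℝ)) :=
    {p | ∀ i : Fin (n + 1), η ≤ p.1 i} with hS_def
  set Tb : Set ((Fin (n + 1) → ℝ) × (Fin n → ℝ)) :=
    (Set.univ.pi fun _ : Fin (n + 1) => Icc η 1) ×ˢ (Set.univ.pi fun _ : Fin n => Icc η 1)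
    with hTb_def
  have hTbm : MeasurableSet Tb :=
    (MeasurableSet.univ_pi fun _ => measurableSet_Icc).prod
      (MeasurableSet.univ_pi fun _ => measurableSet_Icc)
  set h : ((Fin (n + 1) → ℝ) × (Fin n → ℝ)) → ℝ≥0∞ :=
    fun p => ENNReal.ofReal (dens2 M p) with hh_def
  have hhm : Measurable h := ENNReal.measurable_ofReal.comp (measurable_dens2 M)
  -- Step E : the normalizing constant as a lower Lebesgue integral
  have hVeq : ENNReal.ofReal M.V = ∫⁻ p in Sawtooth.box n, h p := by
    have hcompact : IsCompact (Sawtooth.box n) :=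
      (isCompact_univ_pi fun _ => isCompact_Icc).prod (isCompact_univ_pi fun _ => isCompact_Icc)
    haveI : Fact (volume (Sawtooth.box n) < ⊤) := ⟨hcompact.measure_lt_top⟩
    have hint : IntegrableOn (dens2 M) (Sawtooth.box n) := by
      choose Cf hCf using fun i : Fin n =>
        isCompact_Icc.exists_bound_of_continuousOn (M.f_smooth i).continuousOn
      choose Cg hCg using fun i : Fin n =>
        isCompact_Icc.exists_bound_of_continuousOn (M.g_smooth i).continuousOn
      have hCf0 : ∀ i, 0 ≤ Cf i := fun i =>
        (norm_nonneg (M.f i 0)).trans (hCf i 0 (Set.left_mem_Icc.2 zero_le_one))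
      have hCg0 : ∀ i, 0 ≤ Cg i := fun i =>
        (norm_nonneg (M.g i 0)).trans (hCg i 0 (Set.left_mem_Icc.2 zero_le_one))
      refine (integrable_const (∏ i : Fin n, (Cf i * Cg i))).mono'
        (measurable_dens2 M).aestronglyMeasurable (Filter.Eventually.of_forall fun p => ?_)
      rw [Real.norm_eq_abs, dens2, Finset.abs_prod]
      refine Finset.prod_le_prod (fun i _ => abs_nonneg _) (fun i _ => ?_)
      split_ifs with hcond
      · rw [abs_mul]
        have h1 : |M.f i (clamp01 (p.2 i - p.1 i.castSucc))| ≤ Cf i := by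
          simpa [Real.norm_eq_abs] using hCf i _ (clamp01_mem _)
        have h2 : |M.g i (clamp01 (p.2 i - p.1 i.succ))| ≤ Cg i := by
          simpa [Real.norm_eq_abs] using hCg i _ (clamp01_mem _)
        exact mul_le_mul h1 h2 (abs_nonneg _) (hCf0 i)
      · simpa using mul_nonneg (hCf0 i) (hCg0 i)
    have hVval : M.V = ∫ p in Sawtooth.box n, dens2 M p := by
      rw [Sawtooth.V]
      exact setIntegral_congr_fun hbox fun p hp => dens_eq_dens2 M hp
    rw [hVval, ofReal_integral_eq_lintegral_ofReal hint
      (Filter.Eventually.of_forall fun p => dens2_nonneg M p)]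
  have hV0 : ENNReal.ofReal M.V ≠ 0 := (ENNReal.ofReal_pos.2 hV).ne'
  -- Step A : express the law of S
  have hA : M.law S = (∫⁻ p in S ∩ Sawtooth.box n, h p) / ENNReal.ofReal M.V := by
    have hpt : ∀ p ∈ S ∩ Sawtooth.box n,
        ENNReal.ofReal (M.dens p.1 p.2 / M.V) = h p * (ENNReal.ofReal M.V)⁻¹ := by
      intro p hp
      rw [ENNReal.ofReal_div_of_pos hV, dens_eq_dens2 M hp.2, ENNReal.div_eq_inv_mul, mul_comm]
    calc M.law S = ∫⁻ p in S ∩ Sawtooth.box n, ENNReal.ofReal (M.dens p.1 p.2 / M.V) := by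
          rw [Sawtooth.law, withDensity_apply _ hS, Measure.restrict_restrict hS]
      _ = ∫⁻ p in S ∩ Sawtooth.box n, h p * (ENNReal.ofReal M.V)⁻¹ :=
          setLIntegral_congr_fun (hS.inter hbox) hpt
      _ = (∫⁻ p in S ∩ Sawtooth.box n, h p) * (ENNReal.ofReal M.V)⁻¹ :=
          lintegral_mul_const' _ _ (ENNReal.inv_ne_top.2 hV0)
      _ = (∫⁻ p in S ∩ Sawtooth.box n, h p) / ENNReal.ofReal M.V := by
          rw [div_eq_mul_inv]
  -- Step B : restrict to the shrunken box
  have hB : (∫⁻ p in S ∩ Sawtooth.box n, h p) ≤ ∫⁻ p in Tb, h p := by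
    rw [← lintegral_indicator (hS.inter hbox), ← lintegral_indicator hTbm]
    refine lintegral_mono fun p => ?_
    by_cases hp : p ∈ S ∩ Sawtooth.box n
    · rw [Set.indicator_of_mem hp]
      by_cases hp2 : p ∈ Tb
      · rw [Set.indicator_of_mem hp2]
      · have hx : ∀ j, p.1 j ∈ Icc η 1 := fun j => ⟨hp.1 j, (hp.2.1 j (Set.mem_univ j)).2⟩
        have hex : ∃ i : Fin n, p.2 i < η := by
          by_contra hcon
          push_neg at hcon
          exact hp2 ⟨fun j _ => hx j, fun i _ => ⟨hcon i, (hp.2.2 i (Set.mem_univ i)).2⟩⟩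
        obtain ⟨i, hi⟩ := hex
        have h0 : dens2 M p = 0 := dens2_eq_zero M hp.1 i hi
        simp [hh_def, h0]
    · simp [Set.indicator_of_notMem hp]
  -- The affine substitution
  haveI : (volume : Measure ((Fin (n + 1) → ℝ) × (Fin n → ℝ))).IsAddHaarMeasure := by
    rw [show (volume : Measure ((Fin (n + 1) → ℝ) × (Fin n → ℝ)))
        = (volume : Measure (Fin (n + 1) → ℝ)).prod volume from rfl]
    exact Measure.prod.instIsAddHaarMeasure _ _
  set c : (Fin (n + 1) → ℝ) × (Fin n → ℝ) := (fun _ => η, fun _ => η) with hc_def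
  set T : ((Fin (n + 1) → ℝ) × (Fin n → ℝ)) → (Fin (n + 1) → ℝ) × (Fin n → ℝ) :=
    fun q => c + (1 - η) • q with hT_def
  have hTcont : Continuous T := continuous_const.add (continuous_id.const_smul (1 - η))
  have hrank : Module.finrank ℝ ((Fin (n + 1) → ℝ) × (Fin n → ℝ)) = 2 * n + 1 := by
    simp [Module.finrank_prod]; ring
  have hmap : Measure.map T volume
      = ENNReal.ofReal (((1 - η) ^ (2 * n + 1))⁻¹) • volume := by
    have h1 := Measure.map_addHaar_smul
      (volume : Measure ((Fin (n + 1) → ℝ) × (Fin n → ℝ))) (r := 1 - η) ha.ne'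
    rw [hrank, abs_of_pos (inv_pos.2 had)] at h1
    have h2 : T = (fun p : (Fin (n + 1) → ℝ) × (Fin n → ℝ) => c + p)
        ∘ (fun q : (Fin (n + 1) → ℝ) × (Fin n → ℝ) => (1 - η) • q) := rfl
    rw [h2, ← Measure.map_map (measurable_const_add c) (measurable_const_smul (1 - η)),
      h1, Measure.map_smul, map_add_left_eq_self volume c]
  have hpre : T ⁻¹' Tb = Sawtooth.box n := by
    ext q
    simp only [hT_def, hTb_def, Set.mem_preimage, Sawtooth.box, Set.mem_prod, Set.mem_pi,
      Set.mem_univ, forall_const, Set.mem_Icc, Prod.fst_add, Prod.snd_add, Pi.add_apply,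
      Prod.smul_fst, Prod.smul_snd, Pi.smul_apply, smul_eq_mul, hc_def]
    constructor
    · rintro ⟨h1, h2⟩
      refine ⟨fun j => ?_, fun j => ?_⟩
      · obtain ⟨hj1, hj2⟩ := h1 j
        constructor
        · nlinarith [(mul_nonneg_iff_of_pos_left ha).1 (by linarith : 0 ≤ (1 - η) * q.1 j)]
        · have : (1 - η) * q.1 j ≤ (1 - η) * 1 := by linarith
          exact le_of_mul_le_mul_left this ha
      · obtain ⟨hj1, hj2⟩ := h2 j
        constructor
        · nlinarith [(mul_nonneg_iff_of_pos_left ha).1 (by linarith : 0 ≤ (1 - η) * q.2 j)]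
        · have : (1 - η) * q.2 j ≤ (1 - η) * 1 := by linarith
          exact le_of_mul_le_mul_left this ha
    · rintro ⟨h1, h2⟩
      refine ⟨fun j => ?_, fun j => ?_⟩
      · obtain ⟨hj1, hj2⟩ := h1 j
        constructor
        · nlinarith
        · nlinarith
      · obtain ⟨hj1, hj2⟩ := h2 j
        constructor
        · nlinarith
        · nlinarith
  have e1 : ∫⁻ q in Sawtooth.box n, h (T q)
      = ENNReal.ofReal (((1 - η) ^ (2 * n + 1))⁻¹) * ∫⁻ p in Tb, h p := by
    calc ∫⁻ q in Sawtooth.box n, h (T q)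
        = ∫⁻ q, (Sawtooth.box n).indicator (fun q => h (T q)) q :=
          (lintegral_indicator hbox _).symm
      _ = ∫⁻ q, Tb.indicator h (T q) := by
          rw [← hpre]
          exact lintegral_congr fun q => rfl
      _ = ∫⁻ p, Tb.indicator h p ∂(Measure.map T volume) :=
          (lintegral_map (hhm.indicator hTbm) hTcont.measurable).symm
      _ = ENNReal.ofReal (((1 - η) ^ (2 * n + 1))⁻¹) * ∫⁻ p, Tb.indicator h p := by
          rw [hmap, lintegral_smul_measure, smul_eq_mul]
      _ = ENNReal.ofReal (((1 - η) ^ (2 * n + 1))⁻¹) * ∫⁻ p in Tb, h p := by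
          rw [lintegral_indicator hTbm]
  have hsub : ∫⁻ p in Tb, h p
      = ENNReal.ofReal ((1 - η) ^ (2 * n + 1)) * ∫⁻ q in Sawtooth.box n, h (T q) := by
    rw [e1, ← mul_assoc, ← ENNReal.ofReal_mul had.le, mul_inv_cancel₀ had.ne',
      ENNReal.ofReal_one, one_mul]
  -- Step D : monotonicity of the density under the substitution
  have hD : (∫⁻ q in Sawtooth.box n, h (T q)) ≤ ∫⁻ q in Sawtooth.box n, h q := by
    refine setLIntegral_mono hhm fun q hq => ?_
    refine ENNReal.ofReal_le_ofReal ?_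
    have hTq : T q = (fun i => η + (1 - η) * q.1 i, fun i => η + (1 - η) * q.2 i) := by
      refine Prod.ext ?_ ?_ <;> funext i <;>
        simp [hT_def, hc_def, smul_eq_mul]
    rw [hTq]
    exact dens2_scale_le M (le_of_lt hη0) hη1 hq
  -- Put everything together
  calc M.law S
      = (∫⁻ p in S ∩ Sawtooth.box n, h p) / ENNReal.ofReal M.V := hA
    _ ≤ (ENNReal.ofReal ((1 - η) ^ (2 * n + 1)) * ENNReal.ofReal M.V) / ENNReal.ofReal M.V := by
        refine ENNReal.div_le_div_right ?_ _
        calc (∫⁻ p in S ∩ Sawtooth.box n, h p)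
            ≤ ∫⁻ p in Tb, h p := hB
          _ = ENNReal.ofReal ((1 - η) ^ (2 * n + 1)) * ∫⁻ q in Sawtooth.box n, h (T q) := hsub
          _ ≤ ENNReal.ofReal ((1 - η) ^ (2 * n + 1)) * ∫⁻ q in Sawtooth.box n, h q :=
              mul_le_mul_right hD _
          _ = ENNReal.ofReal ((1 - η) ^ (2 * n + 1)) * ENNReal.ofReal M.V := by rw [hVeq]
    _ = ENNReal.ofReal ((1 - η) ^ (2 * n + 1)) := by
        rw [mul_div_assoc, ENNReal.div_self hV0 ENNReal.ofReal_ne_top, mul_one]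


end
end

section
/- Let M > 0 and let f, g : [0,1] → ℝ be continuously differentiable functions with ‖f′ − g′‖_∞ ≤ M. Let F, G : [0,1] → ℝ be primitives of f and g respectively. Then for every ε with 0 < ε ≤ M: if ‖F − G‖_∞ ≤ ε²/(8M), then ‖f − g‖_∞ ≤ ε. (This is the paper's Lemma relating closeness of cumulative distribution functions to closeness of densities, with an adjusted constant.) -/
open Set

lemma stmt13_aux (M : ℝ) (hM : 0 < M) (f g f' g' F G : ℝ → ℝ)
    (hf : ∀ t ∈ Icc (0:ℝ) 1, HasDerivAt f (f' t) t)
    (hg : ∀ t ∈ Icc (0:ℝ) 1, HasDerivAt g (g' t) t)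
    (hderiv : ∀ t ∈ Icc (0:ℝ) 1, |f' t - g' t| ≤ M)
    (hF : ∀ t ∈ Icc (0:ℝ) 1, HasDerivAt F (f t) t)
    (hG : ∀ t ∈ Icc (0:ℝ) 1, HasDerivAt G (g t) t)
    (ε : ℝ) (hε : 0 < ε)
    (hFG : ∀ t ∈ Icc (0:ℝ) 1, |F t - G t| ≤ ε ^ 2 / (8 * M))
    (a b : ℝ) (hab : a < b) (hsub : Icc a b ⊆ Icc (0:ℝ) 1)
    (hlen : b - a = ε / (2 * M)) (t : ℝ) (ht : t ∈ Icc a b) :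
    |f t - g t| ≤ ε := by
  have hφ : ∀ x ∈ Icc a b, HasDerivAt (fun x => F x - G x) (f x - g x) x :=
    fun x hx => (hF x (hsub hx)).sub (hG x (hsub hx))
  obtain ⟨c, hc, hceq⟩ := exists_hasDerivAt_eq_slope (fun x => F x - G x)
    (fun x => f x - g x) hab
    (fun x hx => (hφ x hx).continuousAt.continuousWithinAt)
    (fun x hx => hφ x (Ioo_subset_Icc_self hx))
  have hc' : c ∈ Icc a b := Ioo_subset_Icc_self hc
  have hδ : 0 < b - a := by linarith
  have hcb : |f c - g c| ≤ ε / 2 := by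
    rw [hceq]
    have h1 := hFG b (hsub (right_mem_Icc.mpr hab.le))
    have h2 := hFG a (hsub (left_mem_Icc.mpr hab.le))
    rw [abs_div, abs_of_pos hδ, div_le_iff₀ hδ, hlen]
    have : |F b - G b - (F a - G a)| ≤ ε ^ 2 / (8 * M) + ε ^ 2 / (8 * M) := by
      calc |F b - G b - (F a - G a)| ≤ |F b - G b| + |F a - G a| := abs_sub _ _
        _ ≤ _ := add_le_add h1 h2
    have hM' : (0:ℝ) < 8 * M := by linarith
    rw [← add_div] at this
    calc |F b - G b - (F a - G a)| ≤ (ε ^ 2 + ε ^ 2) / (8 * M) := this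
      _ = ε / 2 * (ε / (2 * M)) := by field_simp; ring
  have hlip : |(f t - g t) - (f c - g c)| ≤ M * |t - c| := by
    have := (convex_Icc a b).norm_image_sub_le_of_norm_hasDerivWithin_le
      (f := fun x => f x - g x) (f' := fun x => f' x - g' x) (C := M)
      (fun x hx => ((hf x (hsub hx)).sub (hg x (hsub hx))).hasDerivWithinAt)
      (fun x hx => by simpa [Real.norm_eq_abs] using hderiv x (hsub hx)) hc' ht
    simpa [Real.norm_eq_abs] using this
  have htc : |t - c| ≤ b - a := by
    rw [abs_sub_le_iff]; constructor <;> linarith [ht.1, ht.2, hc'.1, hc'.2]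
  have hMba : M * (b - a) = ε / 2 := by rw [hlen]; field_simp
  have h3 : |f t - g t| ≤ |(f t - g t) - (f c - g c)| + |f c - g c| := by
    calc |f t - g t| = |((f t - g t) - (f c - g c)) + (f c - g c)| := by ring_nf
      _ ≤ _ := abs_add_le _ _
  have h4 : M * |t - c| ≤ M * (b - a) := by nlinarith
  linarith


/-- If primitives `F`, `G` of `f`, `g` are `ε²/(8M)`-close on `[0,1]`
and the derivatives of `f` and `g` differ by at most `M` on `[0,1]`, then `f` and `g` are
`ε`-close on `[0,1]` (for `0 < ε ≤ M`). -/
theorem stmt13 (M : ℝ) (hM : 0 < M) (f g f' g' F G : ℝ → ℝ)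
    (hf : ∀ t ∈ Icc (0:ℝ) 1, HasDerivAt f (f' t) t)
    (hg : ∀ t ∈ Icc (0:ℝ) 1, HasDerivAt g (g' t) t)
    (hf'c : ContinuousOn f' (Icc (0:ℝ) 1))
    (hg'c : ContinuousOn g' (Icc (0:ℝ) 1))
    (hderiv : ∀ t ∈ Icc (0:ℝ) 1, |f' t - g' t| ≤ M)
    (hF : ∀ t ∈ Icc (0:ℝ) 1, HasDerivAt F (f t) t)
    (hG : ∀ t ∈ Icc (0:ℝ) 1, HasDerivAt G (g t) t)
    (ε : ℝ) (hε : 0 < ε) (hεM : ε ≤ M)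
    (hFG : ∀ t ∈ Icc (0:ℝ) 1, |F t - G t| ≤ ε ^ 2 / (8 * M)) :
    ∀ t ∈ Icc (0:ℝ) 1, |f t - g t| ≤ ε := by
  intro t ht
  set δ := ε / (2 * M) with hδdef
  have hδpos : 0 < δ := by positivity
  have hδhalf : δ ≤ 1 / 2 := by
    rw [hδdef, div_le_div_iff₀ (by linarith) (by norm_num)]; linarith
  by_cases hcase : t + δ ≤ 1
  · exact stmt13_aux M hM f g f' g' F G hf hg hderiv hF hG ε hε hFG t (t + δ)
      (by linarith)
      (fun x hx => ⟨by cases hx; linarith [ht.1], by cases hx; linarith⟩)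
      (by ring) t ⟨le_refl t, by linarith⟩
  · push_neg at hcase
    have h0 : 0 ≤ t - δ := by linarith [ht.2]
    exact stmt13_aux M hM f g f' g' F G hf hg hderiv hF hG ε hε hFG (t - δ) t
      (by linarith)
      (fun x hx => ⟨by cases hx; linarith, by cases hx; linarith [ht.2]⟩)
      (by ring) t ⟨by linarith, le_refl t⟩
end

section
/- For each integer b ≥ 2 define, for x ∈ [0,1] and y ∈ (0,1], d_b(x,y) = (1 − x^b − (1−y)^b + (max(x−y,0))^b) / ((1 − 1/(b+1))·(1 − (1−y)^b) + (y/(b+1))·(1−y)^b). Then sup_{x ∈ [0,1], y ∈ (0,1]} | d_b(x,y) − (1 − x^b) | → 0 as b → ∞; consequently sup_{x ∈ [0,1], y,y′ ∈ (0,1]} | d_b(x,y) − d_b(x,y′) | → 0 as b → ∞. -/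
open Set

noncomputable section

/-- The conditional density of the first cell value of the composition with runs
`(2, b, 2)` given the value `y` at the top of the middle run. -/
def db (b : ℕ) (x y : ℝ) : ℝ :=
  (1 - x ^ b - (1 - y) ^ b + (max (x - y) 0) ^ b) /
    ((1 - 1 / (b + 1)) * (1 - (1 - y) ^ b) + (y / (b + 1)) * (1 - y) ^ b)

section Helpers

open Finset

private theorem pow_sub_pow_le' (a c : ℝ) (n : ℕ) (hc : 0 ≤ c) (hca : c ≤ a) :
    a ^ n - c ^ n ≤ n * a ^ (n - 1) * (a - c) := by
  have ha : 0 ≤ a := hc.trans hca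
  rw [← geom_sum₂_mul a c n]
  have hbound : ∑ i ∈ range n, a ^ i * c ^ (n - 1 - i) ≤ n * a ^ (n - 1) := by
    calc ∑ i ∈ range n, a ^ i * c ^ (n - 1 - i)
        ≤ ∑ i ∈ range n, a ^ (n - 1) := by
          refine Finset.sum_le_sum fun i hi => ?_
          have hi' : i < n := Finset.mem_range.mp hi
          calc a ^ i * c ^ (n - 1 - i) ≤ a ^ i * a ^ (n - 1 - i) := by
                exact mul_le_mul_of_nonneg_left (pow_le_pow_left₀ hc hca _) (pow_nonneg ha _)
            _ = a ^ (i + (n - 1 - i)) := (pow_add a i _).symm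
            _ = a ^ (n - 1) := by congr 1; omega
      _ = n * a ^ (n - 1) := by simp [Finset.sum_const, nsmul_eq_mul]
  exact mul_le_mul_of_nonneg_right hbound (by linarith)

private theorem le_pow_sub_pow' (a c : ℝ) (n : ℕ) (hc : 0 ≤ c) (hca : c ≤ a) :
    (n : ℝ) * c ^ (n - 1) * (a - c) ≤ a ^ n - c ^ n := by
  have ha : 0 ≤ a := hc.trans hca
  rw [← geom_sum₂_mul a c n]
  have hbound : (n : ℝ) * c ^ (n - 1) ≤ ∑ i ∈ range n, a ^ i * c ^ (n - 1 - i) := by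
    calc (n : ℝ) * c ^ (n - 1) = ∑ i ∈ range n, c ^ (n - 1) := by
          simp [Finset.sum_const, nsmul_eq_mul]
      _ ≤ ∑ i ∈ range n, a ^ i * c ^ (n - 1 - i) := by
          refine Finset.sum_le_sum fun i hi => ?_
          have hi' : i < n := Finset.mem_range.mp hi
          calc c ^ (n - 1) = c ^ (i + (n - 1 - i)) := by congr 1; omega
            _ = c ^ i * c ^ (n - 1 - i) := pow_add c i _
            _ ≤ a ^ i * c ^ (n - 1 - i) := by
                exact mul_le_mul_of_nonneg_right (pow_le_pow_left₀ hc hca _) (pow_nonneg hc _)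
  exact mul_le_mul_of_nonneg_right hbound (by linarith)

private theorem quarter_pow (b : ℕ) (hb : 2 ≤ b) : ((1:ℝ)/4) ^ (b-1) ≤ 1 / b := by
  have hbpos : (0:ℝ) < b := by exact_mod_cast (show 0 < b by omega)
  have hnat : b ≤ 4 ^ (b - 1) := le_of_lt <| by
    calc b < 2 ^ b := Nat.lt_two_pow_self
      _ ≤ 2 ^ (2 * (b - 1)) := Nat.pow_le_pow_right (by norm_num) (by omega)
      _ = 4 ^ (b - 1) := by rw [pow_mul]; norm_num
  have hcast : (b:ℝ) ≤ 4 ^ (b-1) := by exact_mod_cast hnat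
  rw [div_pow, one_pow]
  exact one_div_le_one_div_of_le hbpos hcast

private theorem caseA1 (b : ℕ) (hb : 2 ≤ b) {x y : ℝ} (hx0 : 0 ≤ x) (hy1 : y ≤ 1)
    (hxy : x ≤ y) : x ^ b * (1 - y) ^ b ≤ (1 / b) * y := by
  have hy0 : 0 ≤ y := hx0.trans hxy
  have h1y0 : (0:ℝ) ≤ 1 - y := by linarith
  obtain ⟨n, rfl⟩ : ∃ n, b = n + 1 := ⟨b - 1, by omega⟩
  have h1 : x ^ (n+1) * (1-y) ^ (n+1) ≤ (y*(1-y)) ^ n * y := by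
    calc x ^ (n+1) * (1-y) ^ (n+1) ≤ y ^ (n+1) * (1-y) ^ (n+1) :=
          mul_le_mul_of_nonneg_right (pow_le_pow_left₀ hx0 hxy _) (pow_nonneg h1y0 _)
      _ = (y*(1-y)) ^ n * (y * (1-y)) := by rw [mul_pow]; ring
      _ ≤ (y*(1-y)) ^ n * y := by
          have hyn : (0:ℝ) ≤ (y*(1-y))^n := pow_nonneg (by positivity) n
          exact mul_le_mul_of_nonneg_left (by nlinarith) hyn
  have h2 : (y*(1-y)) ^ n ≤ ((1:ℝ)/4) ^ n :=
    pow_le_pow_left₀ (by positivity) (by nlinarith [sq_nonneg (2*y-1)]) n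
  have h3 := quarter_pow (n+1) hb
  simp only [Nat.add_sub_cancel] at h3
  calc x ^ (n+1) * (1-y)^(n+1) ≤ (y*(1-y))^n * y := h1
    _ ≤ ((1:ℝ)/4)^n * y := mul_le_mul_of_nonneg_right h2 hy0
    _ ≤ (1/(n+1:ℕ)) * y := mul_le_mul_of_nonneg_right h3 hy0

private theorem caseA2 (b : ℕ) {x y : ℝ} (hx1 : x ≤ 1) (hy0 : 0 < y) (hy1 : y ≤ 1)
    (hxy : y ≤ x) : (x*(1-y))^b - (x-y)^b ≤ y * (1-y)^(b-1) := by
  have hx0 : (0:ℝ) ≤ x := hy0.le.trans hxy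
  have h1y0 : (0:ℝ) ≤ 1 - y := by linarith
  have hca : x - y ≤ x * (1-y) := by nlinarith
  have h := pow_sub_pow_le' (x*(1-y)) (x-y) b (by linarith) hca
  have h2 := le_pow_sub_pow' 1 x b hx0 hx1
  rw [one_pow] at h2
  have hA1 : (b:ℝ) * x^(b-1) * (1 - x) ≤ 1 := by
    have : x ^ b ≥ 0 := pow_nonneg hx0 b
    linarith
  have hmp : (x*(1-y))^(b-1) = x^(b-1) * (1-y)^(b-1) := mul_pow x (1-y) (b-1)
  have heq : (b:ℝ) * (x*(1-y))^(b-1) * (x*(1-y) - (x-y)) =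
      ((b:ℝ) * x^(b-1) * (1-x)) * (y * (1-y)^(b-1)) := by rw [hmp]; ring
  have hB0 : (0:ℝ) ≤ y * (1-y)^(b-1) := by positivity
  calc (x*(1-y))^b - (x-y)^b ≤ (b:ℝ) * (x*(1-y))^(b-1) * (x*(1-y) - (x-y)) := h
    _ = ((b:ℝ) * x^(b-1) * (1-x)) * (y * (1-y)^(b-1)) := heq
    _ ≤ 1 * (y * (1-y)^(b-1)) := mul_le_mul_of_nonneg_right hA1 hB0
    _ = y * (1-y)^(b-1) := one_mul _

private theorem t_lower (b : ℕ) {y : ℝ} (hy0 : 0 ≤ y) (hy1 : y ≤ 1) :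
    (b:ℝ) * y * (1-y)^(b-1) ≤ 1 - (1-y)^b := by
  have h := le_pow_sub_pow' 1 (1-y) b (by linarith) (by linarith)
  rw [one_pow] at h
  calc (b:ℝ) * y * (1-y)^(b-1) = (b:ℝ) * (1-y)^(b-1) * (1 - (1-y)) := by ring
    _ ≤ 1 - (1-y)^b := h

/-- Key uniform estimate: `|d_b(x,y) - (1 - x^b)| ≤ 5/b`. -/
private theorem db_key (b : ℕ) (hb : 2 ≤ b) {x y : ℝ} (hx : x ∈ Icc (0:ℝ) 1)
    (hy : y ∈ Ioc (0:ℝ) 1) : |db b x y - (1 - x ^ b)| ≤ 5 / b := by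
  obtain ⟨hx0, hx1⟩ := hx
  obtain ⟨hy0, hy1⟩ := hy
  have hb2 : (2:ℝ) ≤ (b:ℝ) := by exact_mod_cast hb
  have hbpos : (0:ℝ) < b := by linarith
  have hb1 : (0:ℝ) < (b:ℝ) + 1 := by linarith
  set u : ℝ := (1 - y) ^ b with hu_def
  have h1y0 : (0:ℝ) ≤ 1 - y := by linarith
  have h1y1 : (1:ℝ) - y ≤ 1 := by linarith
  have hu0 : 0 ≤ u := pow_nonneg h1y0 b
  have hu_le : u ≤ 1 - y := by
    calc u ≤ (1 - y) ^ 1 := pow_le_pow_of_le_one h1y0 h1y1 (by omega)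
      _ = 1 - y := pow_one _
  set t : ℝ := 1 - u with ht_def
  have hty : y ≤ t := by simp only [ht_def]; linarith
  have ht0 : 0 < t := lt_of_lt_of_le hy0 hty
  set m : ℝ := max (x - y) 0 with hm_def
  have hm0 : 0 ≤ m := le_max_right _ _
  set D : ℝ := (1 - 1 / ((b:ℝ) + 1)) * t + (y / ((b:ℝ) + 1)) * u with hD_def
  have haD : (2/3 : ℝ) * t ≤ D := by
    have h13 : 1 / ((b:ℝ) + 1) ≤ 1/3 := by
      rw [div_le_div_iff₀ hb1 (by norm_num)]; linarith
    have hpos2 : (0:ℝ) ≤ (y / ((b:ℝ) + 1)) * u := by positivity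
    nlinarith
  have hD0 : 0 < D := lt_of_lt_of_le (by positivity) haD
  have hxb0 : 0 ≤ x ^ b := pow_nonneg hx0 b
  have hxb1 : x ^ b ≤ 1 := pow_le_one₀ hx0 hx1
  set N : ℝ := 1 - x ^ b - u + m ^ b with hN_def
  have hdecomp : N - (1 - x ^ b) * D =
      (m ^ b - x ^ b * u) + (1 - x ^ b) * (t - y * u) / ((b:ℝ) + 1) := by
    simp only [hN_def, hD_def, ht_def]
    field_simp
    ring
  -- bound the first error term
  have hA : |m ^ b - x ^ b * u| ≤ t / b := by
    rcases le_or_gt x y with hxy | hxy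
    · have hm : m = 0 := max_eq_right (by linarith)
      have hmb : m ^ b = 0 := by rw [hm]; exact zero_pow (by omega)
      rw [hmb, zero_sub, abs_neg, abs_of_nonneg (by positivity)]
      calc x ^ b * u ≤ (1/b) * y := caseA1 b hb hx0 hy1 hxy
        _ ≤ (1/b) * t := mul_le_mul_of_nonneg_left hty (by positivity)
        _ = t / b := by rw [one_div_mul_eq_div]
    · have hm : m = x - y := max_eq_left (by linarith)
      have hnum : m ^ b - x ^ b * u = (x-y)^b - (x*(1-y))^b := by
        rw [hm, hu_def, mul_pow]
      have hle : (x-y)^b ≤ (x*(1-y))^b :=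
        pow_le_pow_left₀ (by linarith) (by nlinarith) b
      rw [hnum, abs_sub_comm, abs_of_nonneg (by linarith)]
      calc (x*(1-y))^b - (x-y)^b ≤ y * (1-y)^(b-1) := caseA2 b hx1 hy0 hy1 hxy.le
        _ = (1/b) * ((b:ℝ) * y * (1-y)^(b-1)) := by field_simp
        _ ≤ (1/b) * t := by
            refine mul_le_mul_of_nonneg_left ?_ (by positivity)
            simpa only [← ht_def, ← hu_def] using t_lower b hy0.le hy1
        _ = t / b := by rw [one_div_mul_eq_div]
  -- bound the second error term
  have hB : |(1 - x ^ b) * (t - y * u) / ((b:ℝ) + 1)| ≤ t / b := by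
    have hyu0 : 0 ≤ y * u := by positivity
    have hyut : y * u ≤ t := by
      calc y * u ≤ y * 1 := by nlinarith
        _ = y := mul_one y
        _ ≤ t := hty
    have h1 : |1 - x ^ b| ≤ 1 := abs_le.2 ⟨by linarith, by linarith⟩
    have h2 : |t - y * u| ≤ t := abs_le.2 ⟨by linarith, by linarith⟩
    rw [abs_div, abs_of_pos hb1, abs_mul]
    have h3 : |1 - x ^ b| * |t - y * u| ≤ t := by
      calc |1 - x ^ b| * |t - y * u| ≤ 1 * |t - y * u| :=
            mul_le_mul_of_nonneg_right h1 (abs_nonneg _)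
        _ = |t - y * u| := one_mul _
        _ ≤ t := h2
    exact div_le_div₀ ht0.le h3 hbpos (by linarith)
  -- combine
  have hNum : |N - (1 - x ^ b) * D| ≤ 2 * t / b := by
    calc |N - (1 - x ^ b) * D| ≤ |m ^ b - x ^ b * u| +
          |(1 - x ^ b) * (t - y * u) / ((b:ℝ) + 1)| := by
            rw [hdecomp]; exact abs_add_le _ _
      _ ≤ t / b + t / b := add_le_add hA hB
      _ = 2 * t / b := by ring
  have hdb : db b x y = N / D := by
    simp only [db, hN_def, hD_def, ht_def, hu_def, hm_def]
  have herr : db b x y - (1 - x ^ b) = (N - (1 - x ^ b) * D) / D := by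
    rw [hdb, div_sub' hD0.ne', mul_comm (1 - x ^ b) D]
  rw [herr, abs_div, abs_of_pos hD0]
  calc |N - (1 - x ^ b) * D| / D ≤ (2 * t / b) / ((2/3) * t) := by
        apply div_le_div₀ (by positivity) hNum (by positivity) haD
    _ = 3 / b := by field_simp
    _ ≤ 5 / b := by gcongr <;> norm_num

end Helpers

/-- `sup_{x ∈ [0,1], y ∈ (0,1]} |d_b(x,y) - (1 - x^b)| → 0` as `b → ∞`,
and consequently `sup_{x, y, y'} |d_b(x,y) - d_b(x,y')| → 0` as `b → ∞`. -/
theorem stmt14 :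
    (∀ ε > (0:ℝ), ∃ B : ℕ, ∀ b : ℕ, 2 ≤ b → B ≤ b →
      ∀ x ∈ Icc (0:ℝ) 1, ∀ y ∈ Ioc (0:ℝ) 1, |db b x y - (1 - x ^ b)| < ε) ∧
    (∀ ε > (0:ℝ), ∃ B : ℕ, ∀ b : ℕ, 2 ≤ b → B ≤ b →
      ∀ x ∈ Icc (0:ℝ) 1, ∀ y ∈ Ioc (0:ℝ) 1, ∀ y' ∈ Ioc (0:ℝ) 1,
        |db b x y - db b x y'| < ε) := by
  have main : ∀ ε > (0:ℝ), ∃ B : ℕ, ∀ b : ℕ, 2 ≤ b → B ≤ b →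
      ∀ x ∈ Icc (0:ℝ) 1, ∀ y ∈ Ioc (0:ℝ) 1, |db b x y - (1 - x ^ b)| < ε := by
    intro ε hε
    obtain ⟨B, hB⟩ := exists_nat_gt (5 / ε)
    refine ⟨B, fun b hb2 hBb x hx y hy => ?_⟩
    have h1 := db_key b hb2 hx hy
    have hbB : (B:ℝ) ≤ b := by exact_mod_cast hBb
    have hbpos : (0:ℝ) < b := by
      have : (2:ℝ) ≤ (b:ℝ) := by exact_mod_cast hb2
      linarith
    have h5 : 5 / (b:ℝ) < ε := by
      rw [div_lt_iff₀ hbpos]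
      have : 5 / ε < (b:ℝ) := lt_of_lt_of_le hB hbB
      rw [div_lt_iff₀ hε] at this
      linarith
    exact lt_of_le_of_lt h1 h5
  refine ⟨main, fun ε hε => ?_⟩
  obtain ⟨B, hB⟩ := main (ε/2) (by linarith)
  refine ⟨B, fun b hb2 hBb x hx y hy y' hy' => ?_⟩
  have h1 := hB b hb2 hBb x hx y hy
  have h2 := hB b hb2 hBb x hx y' hy'
  calc |db b x y - db b x y'|
      = |(db b x y - (1 - x ^ b)) - (db b x y' - (1 - x ^ b))| := by ring_nf
    _ ≤ |db b x y - (1 - x ^ b)| + |db b x y' - (1 - x ^ b)| := abs_sub _ _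
    _ < ε/2 + ε/2 := add_lt_add h1 h2
    _ = ε := by ring

end
end

section
/- Let λ be a composition of n ≥ 2 and let μ_λ be Lebesgue measure on [0,1]^n conditioned on E_λ. For x ∈ E_λ let σ = std(x) be the rank permutation of x. Then for every A > 0: μ_λ( max( |σ(1)/(n+1) − x_1| , |σ(n)/(n+1) − x_n| ) > A/√(n+2) ) ≤ 2/A². -/
open MeasureTheory Set

noncomputable section

/-- The region `E_λ ⊆ [0,1]^n` attached to the composition of `n`
with descent set `D ⊆ {1,…,n-1}`. -/
def Eset (n : ℕ) (D : Finset ℕ) : Set (Fin n → ℝ) :=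
  {x | (∀ i, x i ∈ Set.Icc (0:ℝ) 1) ∧
    ∀ i j : Fin n, (j : ℕ) = (i : ℕ) + 1 →
      ((((i : ℕ) + 1) ∈ D → x j < x i) ∧ (((i : ℕ) + 1) ∉ D → x i < x j))}

/-- 1-based rank function: `stdRank n x i = #{j : x j ≤ x i}` (the standardization). -/
def stdRank (n : ℕ) (x : Fin n → ℝ) (i : Fin n) : ℕ :=
  (Finset.univ.filter (fun j => x j ≤ x i)).card

namespace Stmt19Aux

open scoped ENNReal

/-! ### Basic sets -/

def Dset (n : ℕ) (σ : Equiv.Perm (Fin n)) : Set (Fin n → ℝ) :=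
  {x | (∀ i, x i ∈ Icc (0:ℝ) 1) ∧ ∀ i j, σ i < σ j → x i < x j}

def Pset (n : ℕ) (σ : Equiv.Perm (Fin n)) (i₀ : Fin n) : Set (Fin n → ℝ) :=
  {x | (∀ i, x i ∈ Icc (0:ℝ) 1) ∧
    ∀ j, (σ j < σ i₀ → x j < x i₀) ∧ (σ i₀ < σ j → x i₀ < x j)}

def distSet (n : ℕ) : Set (Fin n → ℝ) := {x | ∀ i j : Fin n, i ≠ j → x i ≠ x j}

lemma measurable_Dset (n : ℕ) (σ : Equiv.Perm (Fin n)) : MeasurableSet (Dset n σ) := by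
  apply MeasurableSet.inter
  · show MeasurableSet {x : Fin n → ℝ | ∀ i, x i ∈ Icc (0:ℝ) 1}
    simp only [setOf_forall]
    exact MeasurableSet.iInter fun i => (measurableSet_Icc).preimage (measurable_pi_apply i)
  · show MeasurableSet {x : Fin n → ℝ | ∀ i j, σ i < σ j → x i < x j}
    simp only [setOf_forall]
    refine MeasurableSet.iInter fun i => MeasurableSet.iInter fun j =>
      MeasurableSet.iInter fun _ => ?_
    have hmi : Measurable fun x : Fin n → ℝ => x i := measurable_pi_apply i
    have hmj : Measurable fun x : Fin n → ℝ => x j := measurable_pi_apply j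
    exact measurableSet_lt hmi hmj

lemma measurable_Eset (n : ℕ) (D : Finset ℕ) : MeasurableSet (Eset n D) := by
  apply MeasurableSet.inter
  · show MeasurableSet {x : Fin n → ℝ | ∀ i, x i ∈ Icc (0:ℝ) 1}
    simp only [setOf_forall]
    exact MeasurableSet.iInter fun i => (measurableSet_Icc).preimage (measurable_pi_apply i)
  · show MeasurableSet {x : Fin n → ℝ | ∀ i j : Fin n, (j : ℕ) = (i : ℕ) + 1 →
      ((((i : ℕ) + 1) ∈ D → x j < x i) ∧ (((i : ℕ) + 1) ∉ D → x i < x j))}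
    simp only [setOf_forall]
    refine MeasurableSet.iInter fun i => MeasurableSet.iInter fun j =>
      MeasurableSet.iInter fun _ => ?_
    have hmi : Measurable fun x : Fin n → ℝ => x i := measurable_pi_apply i
    have hmj : Measurable fun x : Fin n → ℝ => x j := measurable_pi_apply j
    by_cases h : ((i : ℕ) + 1) ∈ D
    · have : {x : Fin n → ℝ | (((i : ℕ) + 1) ∈ D → x j < x i) ∧
          (((i : ℕ) + 1) ∉ D → x i < x j)} = {x | x j < x i} := by
        ext x; simp [h]
      rw [this]
      exact measurableSet_lt hmj hmi
    · have : {x : Fin n → ℝ | (((i : ℕ) + 1) ∈ D → x j < x i) ∧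
          (((i : ℕ) + 1) ∉ D → x i < x j)} = {x | x i < x j} := by
        ext x; simp [h]
      rw [this]
      exact measurableSet_lt hmi hmj

lemma volume_tie (n : ℕ) (i j : Fin n) (h : i ≠ j) :
    volume {x : Fin n → ℝ | x i = x j} = 0 := by
  have heq : {x : Fin n → ℝ | x i = x j} =
      (LinearMap.ker ((LinearMap.proj i : (Fin n → ℝ) →ₗ[ℝ] ℝ) - LinearMap.proj j) :
        Set (Fin n → ℝ)) := by
    ext x; simp [LinearMap.mem_ker, sub_eq_zero]
  rw [heq]
  apply Measure.addHaar_submodule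
  intro htop
  have h1 : (Pi.single i 1 : Fin n → ℝ) ∈
      LinearMap.ker ((LinearMap.proj i : (Fin n → ℝ) →ₗ[ℝ] ℝ) - LinearMap.proj j) := by
    rw [htop]; trivial
  simp [LinearMap.mem_ker, Pi.single_apply, h, h.symm] at h1

lemma volume_distSet_compl (n : ℕ) : volume (distSet n)ᶜ = 0 := by
  have hsub : (distSet n)ᶜ ⊆ ⋃ i : Fin n, ⋃ j : Fin n, ⋃ _ : i ≠ j,
      {x : Fin n → ℝ | x i = x j} := by
    intro x hx
    simp only [distSet, mem_compl_iff, mem_setOf_eq, not_forall] at hx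
    obtain ⟨i, j, hij, hx⟩ := hx
    simp only [mem_iUnion]
    exact ⟨i, j, hij, not_not.mp hx⟩
  refine measure_mono_null hsub ?_
  exact measure_iUnion_null fun i => measure_iUnion_null fun j => measure_iUnion_null fun h =>
    volume_tie n i j h

/-! ### Permutation lemmas -/

lemma mp_perm (n : ℕ) (π : Equiv.Perm (Fin n)) :
    MeasurePreserving (fun x : Fin n → ℝ => x ∘ π) volume volume := by
  have h := volume_measurePreserving_piCongrLeft (fun _ : Fin n => ℝ) π.symm
  convert h using 1
  funext x
  ext i
  simp [MeasurableEquiv.coe_piCongrLeft, Equiv.piCongrLeft_apply, Function.comp]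

lemma preimage_comp_Dset (n : ℕ) (σ π : Equiv.Perm (Fin n)) :
    (fun x : Fin n → ℝ => x ∘ π) ⁻¹' (Dset n σ) = Dset n (π.symm.trans σ) := by
  ext x
  simp only [Dset, mem_preimage, mem_setOf_eq, Function.comp_apply, Equiv.trans_apply]
  constructor
  · rintro ⟨hcube, hord⟩
    refine ⟨fun i => by simpa using hcube (π.symm i), fun i j hij => ?_⟩
    have := hord (π.symm i) (π.symm j) (by simpa using hij)
    simpa using this
  · rintro ⟨hcube, hord⟩
    refine ⟨fun i => hcube (π i), fun i j hij => ?_⟩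
    have := hord (π i) (π j) (by simpa using hij)
    simpa using this

lemma vol_Dset_class (n : ℕ) (σ τ : Equiv.Perm (Fin n)) (i₀ : Fin n) (h0 : τ i₀ = σ i₀)
    (C : Set ℝ) (hC : MeasurableSet C) :
    volume (Dset n τ ∩ {x | x i₀ ∈ C}) = volume (Dset n σ ∩ {x | x i₀ ∈ C}) := by
  set π : Equiv.Perm (Fin n) := σ.trans τ.symm with hπ
  have hπi₀ : π i₀ = i₀ := by simp [hπ, h0, Equiv.symm_apply_eq]
  have hcomp : π.symm.trans σ = τ := by
    ext i
    simp [hπ, Equiv.symm_apply_eq]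
  have hpre : (fun x : Fin n → ℝ => x ∘ π) ⁻¹' (Dset n σ ∩ {x | x i₀ ∈ C})
      = Dset n τ ∩ {x | x i₀ ∈ C} := by
    rw [preimage_inter, preimage_comp_Dset, hcomp]
    congr 1
    ext x
    simp [hπi₀]
  rw [← hpre]
  exact (mp_perm n π).measure_preimage
    ((measurable_Dset n σ).inter ((hC).preimage (measurable_pi_apply i₀))).nullMeasurableSet

lemma card_below' (n : ℕ) (σ : Equiv.Perm (Fin n)) (i : Fin n) :
    (Finset.univ.filter (fun j => σ j < σ i)).card = (σ i : ℕ) := by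
  have h : (Finset.univ.filter (fun j => σ j < σ i)) =
      (Finset.Iio (σ i)).image σ.symm := by
    ext j
    simp only [Finset.mem_filter, Finset.mem_univ, true_and, Finset.mem_image, Finset.mem_Iio]
    constructor
    · intro hj; exact ⟨σ j, hj, σ.symm_apply_apply j⟩
    · rintro ⟨v, hv, rfl⟩; simpa using hv
  rw [h, Finset.card_image_of_injective _ σ.symm.injective, Fin.card_Iio]

lemma perm_eq_of_iff (n : ℕ) (σ τ : Equiv.Perm (Fin n))
    (h : ∀ i j, σ i < σ j ↔ τ i < τ j) : σ = τ := by
  ext i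
  have := card_below' n σ i
  rw [Finset.filter_congr (fun j _ => (h j i)), card_below' n τ i] at this
  exact congrArg _ (Fin.ext this.symm)

lemma Dset_order_iff (n : ℕ) (σ : Equiv.Perm (Fin n)) (x : Fin n → ℝ)
    (hx : x ∈ Dset n σ) : ∀ i j, σ i < σ j ↔ x i < x j := by
  intro i j
  refine ⟨hx.2 i j, fun hij => ?_⟩
  rcases lt_trichotomy (σ i) (σ j) with h | h | h
  · exact h
  · have : i = j := σ.injective h
    subst this
    exact absurd hij (lt_irrefl _)
  · exact absurd (hx.2 j i h) (lt_asymm hij)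

lemma Dset_subset_dist (n : ℕ) (σ : Equiv.Perm (Fin n)) : Dset n σ ⊆ distSet n := by
  intro x hx i j hij heq
  rcases lt_or_gt_of_ne (fun h : σ i = σ j => hij (σ.injective h)) with h | h
  · exact absurd ((Dset_order_iff n σ x hx i j).1 h) (by rw [heq]; exact lt_irrefl _)
  · exact absurd ((Dset_order_iff n σ x hx j i).1 h) (by rw [heq]; exact lt_irrefl _)

/-! ### Standardization -/

lemma stdRank_eq (n : ℕ) (σ : Equiv.Perm (Fin n)) (x : Fin n → ℝ)
    (hx : ∀ i j, σ i < σ j ↔ x i < x j) (i : Fin n) :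
    stdRank n x i = (σ i : ℕ) + 1 := by
  have hdist : ∀ j, j ≠ i → x j ≠ x i := by
    intro j hj heq
    rcases lt_or_gt_of_ne (σ.injective.ne hj : σ j ≠ σ i) with h | h
    · exact absurd ((hx j i).1 h) (by rw [heq]; exact lt_irrefl _)
    · exact absurd ((hx i j).1 h) (by rw [heq]; exact lt_irrefl _)
  have h : (Finset.univ.filter (fun j => x j ≤ x i)) =
      insert i (Finset.univ.filter (fun j => x j < x i)) := by
    ext j
    simp only [Finset.mem_filter, Finset.mem_univ, true_and, Finset.mem_insert]
    constructor
    · intro hj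
      rcases eq_or_ne j i with rfl | hne
      · exact Or.inl rfl
      · exact Or.inr (lt_of_le_of_ne hj (hdist j hne))
    · rintro (rfl | hj); · exact le_refl _
      · exact le_of_lt hj
  rw [stdRank, h, Finset.card_insert_of_notMem (by simp), ← card_below' n σ i,
    Finset.filter_congr (fun j _ => by simp [← hx j i] :
      ∀ j ∈ Finset.univ, (x j < x i) ↔ (σ j < σ i))]

lemma exists_stdPerm (n : ℕ) (x : Fin n → ℝ) (hx : ∀ i j : Fin n, i ≠ j → x i ≠ x j) :
    ∃ σ : Equiv.Perm (Fin n), ∀ i j, σ i < σ j ↔ x i < x j := by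
  classical
  have hcard : ∀ i : Fin n, (Finset.univ.filter (fun j => x j < x i)).card < n := by
    intro i
    calc (Finset.univ.filter (fun j => x j < x i)).card
        ≤ (Finset.univ.erase i).card := by
          apply Finset.card_le_card
          intro j hj
          simp only [Finset.mem_filter, Finset.mem_univ, true_and] at hj
          simp only [Finset.mem_erase, Finset.mem_univ, and_true]
          rintro rfl; exact lt_irrefl _ hj
      _ < n := by
          rw [Finset.card_erase_of_mem (Finset.mem_univ i)]
          have : 0 < n := i.pos
          simp only [Finset.card_univ, Fintype.card_fin]
          omega
  set f : Fin n → Fin n := fun i => ⟨_, hcard i⟩ with hf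
  have hmono : ∀ i j, x i < x j → f i < f j := by
    intro i j hij
    have hsub : (Finset.univ.filter (fun l => x l < x i)) ⊆
        (Finset.univ.filter (fun l => x l < x j)) := by
      intro l hl
      simp only [Finset.mem_filter, Finset.mem_univ, true_and] at hl ⊢
      exact hl.trans hij
    have hi : i ∈ (Finset.univ.filter (fun l => x l < x j)) := by simp [hij]
    have hni : i ∉ (Finset.univ.filter (fun l => x l < x i)) := by simp
    exact Finset.card_lt_card (Finset.ssubset_iff_of_subset hsub |>.2 ⟨i, hi, hni⟩)
  have hinj : Function.Injective f := by
    intro i j hij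
    by_contra hne
    rcases lt_or_gt_of_ne (hx i j hne) with h | h
    · exact absurd hij (ne_of_lt (hmono i j h))
    · exact absurd hij.symm (ne_of_lt (hmono j i h))
  have hbij : Function.Bijective f := (Finite.injective_iff_bijective).1 hinj
  refine ⟨Equiv.ofBijective f hbij, ?_⟩
  intro i j
  constructor
  · intro h
    rcases eq_or_ne i j with rfl | hne
    · exact absurd h (lt_irrefl _)
    rcases lt_or_gt_of_ne (hx i j hne) with h' | h'
    · exact h'
    · exact absurd h (not_lt_of_gt (hmono j i h'))
  · exact hmono i j

/-! ### Beta integral computations -/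

lemma beta_deriv (a b : ℕ) (x : ℝ) :
    HasDerivAt (fun y : ℝ => y^(a+1)*(1-y)^(b+1))
      (((a:ℝ)+1)*x^a*(1-x)^(b+1) - ((b:ℝ)+1)*x^(a+1)*(1-x)^b) x := by
  have h1 : HasDerivAt (fun y:ℝ => y^(a+1)) (((a:ℝ)+1)*x^a) x := by
    simpa using (hasDerivAt_pow (a+1) x)
  have h2 : HasDerivAt (fun y:ℝ => (1-y)^(b+1)) (-(((b:ℝ)+1)*(1-x)^b)) x := by
    have := (hasDerivAt_pow (b+1) (1-x)).comp x
      ((hasDerivAt_const x (1:ℝ)).sub (hasDerivAt_id x))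
    refine this.congr_deriv ?_
    simp
  refine (h1.mul h2).congr_deriv ?_
  ring

lemma beta_intable (c d : ℕ) : IntervalIntegrable (fun x : ℝ => x^c*(1-x)^d) volume 0 1 :=
  (Continuous.mul (continuous_pow c)
    ((continuous_const.sub continuous_id).pow d)).intervalIntegrable 0 1

lemma beta_step (a b : ℕ) :
    ((a:ℝ)+b+2) * ∫ x in (0:ℝ)..1, x^(a+1)*(1-x)^b
      = ((a:ℝ)+1) * ∫ x in (0:ℝ)..1, x^a*(1-x)^b := by
  have hzero : (∫ x in (0:ℝ)..1,
      (((a:ℝ)+1)*x^a*(1-x)^(b+1) - ((b:ℝ)+1)*x^(a+1)*(1-x)^b)) = 0 := by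
    rw [intervalIntegral.integral_eq_sub_of_hasDerivAt (fun x _ => beta_deriv a b x)]
    · simp
    · apply Continuous.intervalIntegrable
      continuity
  simp only [mul_assoc] at hzero
  have hsplit : (∫ x in (0:ℝ)..1, x^a*(1-x)^(b+1))
      = (∫ x in (0:ℝ)..1, x^a*(1-x)^b) - ∫ x in (0:ℝ)..1, x^(a+1)*(1-x)^b := by
    rw [← intervalIntegral.integral_sub (beta_intable a b) (beta_intable (a+1) b)]
    apply intervalIntegral.integral_congr
    intro x _
    ring
  rw [intervalIntegral.integral_sub ((beta_intable a (b+1)).const_mul _)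
      ((beta_intable (a+1) b).const_mul _),
    intervalIntegral.integral_const_mul, intervalIntegral.integral_const_mul, hsplit] at hzero
  ring_nf at hzero ⊢
  linarith

lemma moment_bound (k m n : ℕ) (hn : n = k + m + 1) :
    ∫ x in (0:ℝ)..1, (x - ((k:ℝ)+1)/((n:ℝ)+1))^2 * (x^k * (1-x)^m)
      ≤ (1/(4*((n:ℝ)+2))) * ∫ x in (0:ℝ)..1, x^k*(1-x)^m := by
  set c₀ : ℝ := ((k:ℝ)+1)/((n:ℝ)+1) with hc₀
  set J0 : ℝ := ∫ x in (0:ℝ)..1, x^k*(1-x)^m with hJ0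
  set J1 : ℝ := ∫ x in (0:ℝ)..1, x^(k+1)*(1-x)^m with hJ1
  set J2 : ℝ := ∫ x in (0:ℝ)..1, x^(k+2)*(1-x)^m with hJ2
  have hn1 : ((n:ℝ)+1) = (k:ℝ)+m+2 := by subst hn; push_cast; ring
  have hn2 : ((n:ℝ)+2) = (k:ℝ)+m+3 := by subst hn; push_cast; ring
  have hn1pos : (0:ℝ) < (n:ℝ)+1 := by positivity
  have hn2pos : (0:ℝ) < (n:ℝ)+2 := by positivity
  have h1 : ((n:ℝ)+1) * J1 = ((k:ℝ)+1) * J0 := by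
    have := beta_step k m
    rw [hn1]
    convert this using 2
  have h2 : ((n:ℝ)+2) * J2 = ((k:ℝ)+2) * J1 := by
    have := beta_step (k+1) m
    rw [hn2]
    convert this using 2 <;> push_cast <;> ring
  have hJ0nn : 0 ≤ J0 := by
    apply intervalIntegral.integral_nonneg (by norm_num : (0:ℝ) ≤ 1)
    intro x hx
    simp only [Set.mem_Icc] at hx
    exact mul_nonneg (pow_nonneg hx.1 _) (pow_nonneg (by linarith [hx.2]) _)
  have e1 : J1 = (((k:ℝ)+1)/((n:ℝ)+1)) * J0 := by
    field_simp
    linarith [h1]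
  have e2 : J2 = (((k:ℝ)+2)/((n:ℝ)+2)) * J1 := by
    field_simp
    linarith [h2]
  have hexp : (∫ x in (0:ℝ)..1, (x - c₀)^2 * (x^k * (1-x)^m))
      = J2 - 2*c₀*J1 + c₀^2*J0 := by
    have hcong : ∀ x ∈ Set.uIcc (0:ℝ) 1, (x - c₀)^2 * (x^k * (1-x)^m)
        = (x^(k+2)*(1-x)^m - 2*c₀*(x^(k+1)*(1-x)^m)) + c₀^2*(x^k*(1-x)^m) := by
      intro x _
      ring
    rw [intervalIntegral.integral_congr hcong,
      intervalIntegral.integral_add (((beta_intable (k+2) m).sub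
        ((beta_intable (k+1) m).const_mul _))) ((beta_intable k m).const_mul _),
      intervalIntegral.integral_sub (beta_intable (k+2) m) ((beta_intable (k+1) m).const_mul _),
      intervalIntegral.integral_const_mul, intervalIntegral.integral_const_mul]
  have hc : (((k:ℝ)+2)/((n:ℝ)+2))*(((k:ℝ)+1)/((n:ℝ)+1)) - 2*c₀*(((k:ℝ)+1)/((n:ℝ)+1)) + c₀^2
      ≤ 1/(4*((n:ℝ)+2)) := by
    rw [hc₀, hn1, hn2]
    have p2 : (0:ℝ) < (k:ℝ)+(m:ℝ)+2 := by positivity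
    have p3 : (0:ℝ) < (k:ℝ)+(m:ℝ)+3 := by positivity
    have key : ((k:ℝ)+2)/((k:ℝ)+(m:ℝ)+3) * (((k:ℝ)+1)/((k:ℝ)+(m:ℝ)+2))
        - 2*(((k:ℝ)+1)/((k:ℝ)+(m:ℝ)+2))*(((k:ℝ)+1)/((k:ℝ)+(m:ℝ)+2))
        + (((k:ℝ)+1)/((k:ℝ)+(m:ℝ)+2))^2
        = (((k:ℝ)+1)*((m:ℝ)+1)) / ((((k:ℝ)+(m:ℝ)+2)^2)*(((k:ℝ)+(m:ℝ)+3))) := by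
      field_simp
      ring
    rw [key, div_le_div_iff₀ (by positivity) (by positivity)]
    nlinarith [mul_nonneg p3.le (sq_nonneg ((k:ℝ)-(m:ℝ))), p2, p3]
  calc (∫ x in (0:ℝ)..1, (x - c₀)^2 * (x^k * (1-x)^m))
      = ((((k:ℝ)+2)/((n:ℝ)+2))*(((k:ℝ)+1)/((n:ℝ)+1)) - 2*c₀*(((k:ℝ)+1)/((n:ℝ)+1)) + c₀^2)
          * J0 := by
        rw [hexp, e2, e1]; ring
    _ ≤ (1/(4*((n:ℝ)+2))) * J0 := mul_le_mul_of_nonneg_right hc hJ0nn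

lemma oneD (k m n : ℕ) (hn : n = k + m + 1) (ε : ℝ) (hε : 0 < ε)
    (bad : Set ℝ)
    (hbad : ∀ t ∈ bad, ε ≤ |t - ((k:ℝ)+1)/((n:ℝ)+1)|) :
    ∫⁻ t in bad ∩ Icc 0 1, ENNReal.ofReal (t ^ k * (1-t) ^ m)
      ≤ ENNReal.ofReal (1/(4*((n:ℝ)+2)*ε^2))
        * ∫⁻ t in Icc 0 1, ENNReal.ofReal (t ^ k * (1-t) ^ m) := by
  set c₀ : ℝ := ((k:ℝ)+1)/((n:ℝ)+1) with hc₀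
  have hw : ∀ t : ℝ, t ∈ Icc (0:ℝ) 1 → 0 ≤ t^k * (1-t)^m := by
    intro t ht
    exact mul_nonneg (pow_nonneg ht.1 _) (pow_nonneg (by linarith [ht.2]) _)
  have hcont : Continuous fun t : ℝ => t^k*(1-t)^m := by continuity
  have hcont2 : Continuous fun t : ℝ => ε⁻¹^2*(t-c₀)^2*(t^k*(1-t)^m) := by continuity
  have hInt : IntegrableOn (fun t : ℝ => ε⁻¹^2*(t-c₀)^2*(t^k*(1-t)^m)) (Icc 0 1) volume :=
    hcont2.integrableOn_Icc
  have hIntw : IntegrableOn (fun t : ℝ => t^k*(1-t)^m) (Icc 0 1) volume :=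
    hcont.integrableOn_Icc
  calc ∫⁻ t in bad ∩ Icc 0 1, ENNReal.ofReal (t ^ k * (1-t) ^ m)
      ≤ ∫⁻ t in bad ∩ Icc 0 1, ENNReal.ofReal (ε⁻¹^2*(t-c₀)^2*(t^k*(1-t)^m)) := by
        apply setLIntegral_mono (ENNReal.measurable_ofReal.comp hcont2.measurable)
        intro t ht
        apply ENNReal.ofReal_le_ofReal
        rcases ht with ⟨ht1, ht2⟩
        have h1 : ε ≤ |t - c₀| := hbad t ht1
        have hsq : ε^2 ≤ (t-c₀)^2 := by
          nlinarith [abs_nonneg (t-c₀), sq_abs (t-c₀), h1, hε]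
        have h2 : 1 ≤ ε⁻¹^2*(t-c₀)^2 := by
          calc (1:ℝ) = ε⁻¹^2 * ε^2 := by field_simp
            _ ≤ ε⁻¹^2*(t-c₀)^2 := mul_le_mul_of_nonneg_left hsq (by positivity)
        nlinarith [hw t ht2, h2]
    _ ≤ ∫⁻ t in Icc 0 1, ENNReal.ofReal (ε⁻¹^2*(t-c₀)^2*(t^k*(1-t)^m)) :=
        lintegral_mono_set inter_subset_right
    _ = ENNReal.ofReal (∫ t in Icc (0:ℝ) 1, ε⁻¹^2*(t-c₀)^2*(t^k*(1-t)^m)) :=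
        (ofReal_integral_eq_lintegral_ofReal hInt (by
          filter_upwards [ae_restrict_mem measurableSet_Icc] with t ht
          have := hw t ht
          positivity)).symm
    _ ≤ ENNReal.ofReal ((1/(4*((n:ℝ)+2)*ε^2)) * ∫ t in Icc (0:ℝ) 1, t^k*(1-t)^m) := by
        apply ENNReal.ofReal_le_ofReal
        have hIcc : ∀ g : ℝ → ℝ, IntegrableOn g (Icc (0:ℝ) 1) volume →
            (∫ t in Icc (0:ℝ) 1, g t) = ∫ t in (0:ℝ)..1, g t := by
          intro g hg
          rw [intervalIntegral.integral_of_le (by norm_num : (0:ℝ) ≤ 1),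
            integral_Icc_eq_integral_Ioc]
        rw [hIcc _ hInt, hIcc _ hIntw]
        have heq : (∫ t in (0:ℝ)..1, ε⁻¹^2*(t-c₀)^2*(t^k*(1-t)^m))
            = ε⁻¹^2 * ∫ t in (0:ℝ)..1, (t-c₀)^2*(t^k*(1-t)^m) := by
          rw [← intervalIntegral.integral_const_mul]
          apply intervalIntegral.integral_congr
          intro t _
          ring
        rw [heq]
        have hmb := moment_bound k m n hn
        calc ε⁻¹^2 * ∫ t in (0:ℝ)..1, (t-c₀)^2*(t^k*(1-t)^m)
            ≤ ε⁻¹^2 * ((1/(4*((n:ℝ)+2))) * ∫ t in (0:ℝ)..1, t^k*(1-t)^m) := by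
              apply mul_le_mul_of_nonneg_left _ (by positivity)
              exact hmb
          _ = (1/(4*((n:ℝ)+2)*ε^2)) * ∫ t in (0:ℝ)..1, t^k*(1-t)^m := by
              rw [← mul_assoc]
              congr 1
              field_simp
    _ = ENNReal.ofReal (1/(4*((n:ℝ)+2)*ε^2))
        * ∫⁻ t in Icc 0 1, ENNReal.ofReal (t ^ k * (1-t) ^ m) := by
        rw [ENNReal.ofReal_mul (by positivity),
          ofReal_integral_eq_lintegral_ofReal hIntw (by
            filter_upwards [ae_restrict_mem measurableSet_Icc] with t ht
            exact hw t ht)]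

/-! ### Fubini for the box pattern set -/

lemma card_succAbove_below (N : ℕ) (σ : Equiv.Perm (Fin (N+1))) (i₀ : Fin (N+1)) :
    (Finset.univ.filter (fun j : Fin N => σ (i₀.succAbove j) < σ i₀)).card = (σ i₀ : ℕ) := by
  rw [← card_below' (N+1) σ i₀]
  rw [show (Finset.univ.filter (fun i : Fin (N+1) => σ i < σ i₀))
      = (Finset.univ.filter (fun j : Fin N => σ (i₀.succAbove j) < σ i₀)).image
          i₀.succAbove from ?_,
    Finset.card_image_of_injective _ (Fin.succAbove_right_injective)]
  ext i
  simp only [Finset.mem_filter, Finset.mem_univ, true_and, Finset.mem_image]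
  constructor
  · intro hi
    have hne : i ≠ i₀ := by rintro rfl; exact absurd hi (lt_irrefl _)
    obtain ⟨j, rfl⟩ := Fin.exists_succAbove_eq hne
    exact ⟨j, hi, rfl⟩
  · rintro ⟨j, hj, rfl⟩; exact hj

lemma Pset_fubini (N : ℕ) (σ : Equiv.Perm (Fin (N+1))) (i₀ : Fin (N+1))
    (C : Set ℝ) (hC : MeasurableSet C) :
    volume (Pset (N+1) σ i₀ ∩ {x | x i₀ ∈ C})
      = ∫⁻ t in C ∩ Icc 0 1,
          ENNReal.ofReal (t ^ (σ i₀ : ℕ) * (1-t) ^ (N - (σ i₀ : ℕ))) := by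
  classical
  set e := MeasurableEquiv.piFinSuccAbove (fun _ : Fin (N+1) => ℝ) i₀ with he
  have hmp := volume_preserving_piFinSuccAbove (fun _ : Fin (N+1) => ℝ) i₀
  set T : Set (ℝ × (Fin N → ℝ)) := {p | (p.1 ∈ C ∩ Icc (0:ℝ) 1) ∧
      ∀ j : Fin N, p.2 j ∈
        (if σ (i₀.succAbove j) < σ i₀ then Ico (0:ℝ) p.1 else Ioc p.1 1)} with hT
  have hset : Pset (N+1) σ i₀ ∩ {x | x i₀ ∈ C} = e ⁻¹' T := by
    ext x
    simp only [Pset, mem_inter_iff, mem_setOf_eq, mem_preimage, hT, he,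
      MeasurableEquiv.piFinSuccAbove_apply, Fin.insertNthEquiv_symm_apply,
      Fin.removeNth, mem_Icc, mem_inter_iff, mem_Ico, mem_Ioc]
    constructor
    · rintro ⟨⟨hcube, hord⟩, hc⟩
      refine ⟨⟨hc, hcube i₀⟩, fun j => ?_⟩
      have hne : i₀.succAbove j ≠ i₀ := Fin.succAbove_ne i₀ j
      rcases lt_trichotomy (σ (i₀.succAbove j)) (σ i₀) with h | h | h
      · rw [if_pos h]
        exact ⟨(hcube _).1, (hord (i₀.succAbove j)).1 h⟩
      · exact absurd (σ.injective h) hne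
      · rw [if_neg (lt_asymm h)]
        exact ⟨(hord (i₀.succAbove j)).2 h, (hcube _).2⟩
    · rintro ⟨⟨hc, h0, h1⟩, hj⟩
      have key : ∀ i : Fin (N+1), (0 ≤ x i ∧ x i ≤ 1) ∧
          (σ i < σ i₀ → x i < x i₀) ∧ (σ i₀ < σ i → x i₀ < x i) := by
        intro i
        rcases eq_or_ne i i₀ with rfl | hne
        · exact ⟨⟨h0, h1⟩, fun h => absurd h (lt_irrefl _), fun h => absurd h (lt_irrefl _)⟩
        · obtain ⟨j, rfl⟩ := Fin.exists_succAbove_eq hne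
          have := hj j
          by_cases h : σ (i₀.succAbove j) < σ i₀
          · rw [if_pos h] at this
            exact ⟨⟨this.1, le_trans this.2.le h1⟩, fun _ => this.2,
              fun h' => absurd h' (lt_asymm h)⟩
          · rw [if_neg h] at this
            exact ⟨⟨le_trans h0 this.1.le, this.2⟩, fun h' => absurd h' h, fun _ => this.1⟩
      exact ⟨⟨fun i => (key i).1, fun i => (key i).2⟩, hc⟩
  have hTmeas : MeasurableSet T := by
    apply MeasurableSet.inter
    · exact (hC.inter measurableSet_Icc).preimage measurable_fst
    · show MeasurableSet {p : ℝ × (Fin N → ℝ) | ∀ j : Fin N, p.2 j ∈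
          (if σ (i₀.succAbove j) < σ i₀ then Ico (0:ℝ) p.1 else Ioc p.1 1)}
      have heq2 : {p : ℝ × (Fin N → ℝ) | ∀ j : Fin N, p.2 j ∈
          (if σ (i₀.succAbove j) < σ i₀ then Ico (0:ℝ) p.1 else Ioc p.1 1)}
        = ⋂ j : Fin N, {p : ℝ × (Fin N → ℝ) | p.2 j ∈
          (if σ (i₀.succAbove j) < σ i₀ then Ico (0:ℝ) p.1 else Ioc p.1 1)} := by
        ext p; simp only [mem_setOf_eq, mem_iInter]
      rw [heq2]
      apply MeasurableSet.iInter
      intro j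
      have hm2 : Measurable fun p : ℝ × (Fin N → ℝ) => p.2 j := by fun_prop
      have hm1 : Measurable fun p : ℝ × (Fin N → ℝ) => p.1 := by fun_prop
      by_cases h : σ (i₀.succAbove j) < σ i₀ <;>
        simp only [h, if_true, if_false, mem_Ico, mem_Ioc]
      · exact ((measurableSet_le measurable_const hm2).inter (measurableSet_lt hm2 hm1))
      · exact ((measurableSet_lt hm1 hm2).inter (measurableSet_le hm2 measurable_const))
  rw [hset, hmp.measure_preimage hTmeas.nullMeasurableSet]
  rw [MeasureTheory.Measure.volume_eq_prod, MeasureTheory.Measure.prod_apply hTmeas]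
  have hslice : ∀ t : ℝ, volume (Prod.mk t ⁻¹' T)
      = (C ∩ Icc 0 1).indicator
          (fun t => ENNReal.ofReal (t ^ (σ i₀ : ℕ) * (1-t) ^ (N - (σ i₀ : ℕ)))) t := by
    intro t
    by_cases ht : t ∈ C ∩ Icc (0:ℝ) 1
    · rw [indicator_of_mem ht]
      have hpre : Prod.mk t ⁻¹' T = Set.pi univ
          (fun j : Fin N => if σ (i₀.succAbove j) < σ i₀ then Ico (0:ℝ) t else Ioc t 1) := by
        ext y
        simp only [mem_preimage, hT, mem_setOf_eq, Set.mem_pi, mem_univ, true_imp_iff]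
        exact ⟨fun h => h.2, fun h => ⟨ht, h⟩⟩
      obtain ⟨htC, ht0, ht1⟩ : t ∈ C ∧ 0 ≤ t ∧ t ≤ 1 := by
        simpa [mem_inter_iff, mem_Icc] using ht
      rw [hpre, volume_pi_pi]
      have hprod : ∀ j : Fin N,
          volume (if σ (i₀.succAbove j) < σ i₀ then Ico (0:ℝ) t else Ioc t 1)
          = (if σ (i₀.succAbove j) < σ i₀ then ENNReal.ofReal t
              else ENNReal.ofReal (1-t)) := by
        intro j
        split_ifs
        · rw [Real.volume_Ico, sub_zero]
        · rw [Real.volume_Ioc]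
      rw [Finset.prod_congr rfl (fun j _ => hprod j), Finset.prod_ite _ _,
        Finset.prod_const, Finset.prod_const, card_succAbove_below]
      have hcard : (Finset.univ.filter (fun j : Fin N => ¬ σ (i₀.succAbove j) < σ i₀)).card
          = N - (σ i₀ : ℕ) := by
        have := Finset.card_filter_add_card_filter_not
          (s := (Finset.univ : Finset (Fin N))) (p := fun j => σ (i₀.succAbove j) < σ i₀)
        rw [card_succAbove_below] at this
        simp only [Finset.card_univ, Fintype.card_fin] at this
        omega
      rw [hcard, ENNReal.ofReal_mul (by positivity), ← ENNReal.ofReal_pow ht0,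
        ← ENNReal.ofReal_pow (by linarith)]
    · rw [indicator_of_notMem ht]
      have hpre : Prod.mk t ⁻¹' T = ∅ := by
        ext y
        simp only [mem_preimage, hT, mem_setOf_eq, mem_empty_iff_false, iff_false]
        rintro ⟨h1, -⟩
        exact ht h1
      rw [hpre, measure_empty]
  rw [lintegral_congr hslice, lintegral_indicator (hC.inter measurableSet_Icc)]

/-! ### Decomposition of the box set into simplices -/

lemma Pset_decomp (n : ℕ) (σ : Equiv.Perm (Fin n)) (i₀ : Fin n)
    (C : Set ℝ) (hC : MeasurableSet C) :
    volume (Pset n σ i₀ ∩ {x | x i₀ ∈ C})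
      = (Finset.univ.filter (fun τ : Equiv.Perm (Fin n) =>
          τ i₀ = σ i₀ ∧ ∀ j, (τ j < τ i₀ ↔ σ j < σ i₀))).card
        * volume (Dset n σ ∩ {x | x i₀ ∈ C}) := by
  classical
  set K := Finset.univ.filter (fun τ : Equiv.Perm (Fin n) =>
      τ i₀ = σ i₀ ∧ ∀ j, (τ j < τ i₀ ↔ σ j < σ i₀)) with hK
  have hKmem : ∀ τ, τ ∈ K ↔ (τ i₀ = σ i₀ ∧ ∀ j, (τ j < τ i₀ ↔ σ j < σ i₀)) := by
    intro τ; simp [hK]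
  have hsub1 : ∀ τ ∈ K, Dset n τ ⊆ Pset n σ i₀ := by
    intro τ hτ x hx
    obtain ⟨h0, hiff⟩ := (hKmem τ).1 hτ
    refine ⟨hx.1, fun j => ⟨fun hj => hx.2 j i₀ ((hiff j).2 hj), fun hj => ?_⟩⟩
    have hne : j ≠ i₀ := fun h => by subst h; exact absurd hj (lt_irrefl _)
    have : τ i₀ < τ j := by
      rcases lt_trichotomy (τ j) (τ i₀) with h | h | h
      · exact absurd ((hiff j).1 h) (lt_asymm hj)
      · exact absurd (τ.injective h) hne
      · exact h
    exact hx.2 i₀ j this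
  have hcover : Pset n σ i₀ ∩ {x | x i₀ ∈ C} ∩ distSet n
      = ⋃ τ ∈ K, (Dset n τ ∩ {x | x i₀ ∈ C}) := by
    apply Subset.antisymm
    · rintro x ⟨⟨hP, hCx⟩, hd⟩
      obtain ⟨τ, hτ⟩ := exists_stdPerm n x hd
      have hxD : x ∈ Dset n τ := ⟨hP.1, fun i j h => (hτ i j).1 h⟩
      have horder : ∀ j, (x j < x i₀ ↔ σ j < σ i₀) := by
        intro j
        constructor
        · intro h
          have hne : j ≠ i₀ := fun hh => by subst hh; exact absurd h (lt_irrefl _)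
          rcases lt_trichotomy (σ j) (σ i₀) with h' | h' | h'
          · exact h'
          · exact absurd (σ.injective h') hne
          · exact absurd ((hP.2 j).2 h') (lt_asymm h)
        · exact (hP.2 j).1
      have hτK : τ ∈ K := by
        rw [hKmem]
        constructor
        · apply Fin.ext
          rw [← card_below' n τ i₀, ← card_below' n σ i₀]
          congr 1
          apply Finset.filter_congr
          intro j _
          simp only [hτ j i₀, horder j]
        · intro j
          rw [hτ j i₀, horder j]
      exact mem_biUnion hτK ⟨hxD, hCx⟩
    · intro x hx
      simp only [mem_iUnion] at hx
      obtain ⟨τ, hτK, hxD, hxC⟩ := hx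
      exact ⟨⟨hsub1 τ hτK hxD, hxC⟩, Dset_subset_dist n τ hxD⟩
  have hdisj : (K : Set (Equiv.Perm (Fin n))).PairwiseDisjoint
      (fun τ => Dset n τ ∩ {x | x i₀ ∈ C}) := by
    intro τ hτ τ' hτ' hne
    refine disjoint_left.2 fun x hx hx' => hne ?_
    exact perm_eq_of_iff n τ τ' (fun i j => by
      rw [Dset_order_iff n τ x hx.1 i j, Dset_order_iff n τ' x hx'.1 i j])
  calc volume (Pset n σ i₀ ∩ {x | x i₀ ∈ C})
      = volume (Pset n σ i₀ ∩ {x | x i₀ ∈ C} ∩ distSet n) :=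
        (measure_inter_conull (volume_distSet_compl n)).symm
    _ = volume (⋃ τ ∈ K, (Dset n τ ∩ {x | x i₀ ∈ C})) := by rw [hcover]
    _ = ∑ τ ∈ K, volume (Dset n τ ∩ {x | x i₀ ∈ C}) :=
        measure_biUnion_finset hdisj (fun τ _ =>
          (measurable_Dset n τ).inter (hC.preimage (measurable_pi_apply i₀)))
    _ = ∑ τ ∈ K, volume (Dset n σ ∩ {x | x i₀ ∈ C}) := by
        apply Finset.sum_congr rfl
        intro τ hτ
        exact vol_Dset_class n σ τ i₀ ((hKmem τ).1 hτ).1 C hC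
    _ = K.card * volume (Dset n σ ∩ {x | x i₀ ∈ C}) := by
        rw [Finset.sum_const, nsmul_eq_mul]

/-! ### The key per-simplex Chebyshev bound -/

lemma key (N : ℕ) (σ : Equiv.Perm (Fin (N+1))) (i₀ : Fin (N+1)) (ε : ℝ) (hε : 0 < ε) :
    volume (Dset (N+1) σ ∩
        {x | ε < |(((σ i₀ : ℕ) : ℝ) + 1)/(((N:ℝ)+1)+1) - x i₀|})
      ≤ ENNReal.ofReal (1/(4*(((N:ℝ)+1)+2)*ε^2)) * volume (Dset (N+1) σ) := by
  classical
  set k : ℕ := (σ i₀ : ℕ) with hk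
  set c₀ : ℝ := ((k:ℝ)+1)/(((N:ℝ)+1)+1) with hc₀
  set bad : Set ℝ := {t | ε < |c₀ - t|} with hbad
  have hbadm : MeasurableSet bad := by
    apply measurableSet_lt measurable_const
    exact (continuous_const.sub continuous_id).abs.measurable
  have hDbad : Dset (N+1) σ ∩ {x | ε < |c₀ - x i₀|}
      = Dset (N+1) σ ∩ {x | x i₀ ∈ bad} := rfl
  have hkN : k ≤ N := by
    have := (σ i₀).isLt
    omega
  have hcast : ((N+1 : ℕ) : ℝ) = (N:ℝ)+1 := by push_cast; ring
  have h1 := Pset_fubini N σ i₀ bad hbadm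
  have h2 := Pset_fubini N σ i₀ univ MeasurableSet.univ
  have h3 := Pset_decomp (N+1) σ i₀ bad hbadm
  have h4 := Pset_decomp (N+1) σ i₀ univ MeasurableSet.univ
  rw [h1] at h3
  rw [h2] at h4
  simp only [univ_inter] at h4
  have hDuniv : Dset (N+1) σ ∩ {x | x i₀ ∈ (univ : Set ℝ)} = Dset (N+1) σ := by
    simp
  rw [hDuniv] at h4
  have hone := oneD k (N - k) (N+1) (by omega) ε hε bad (by
    intro t ht
    rw [hbad, mem_setOf_eq] at ht
    have hcast2 : ((k:ℝ)+1)/(((N+1:ℕ):ℝ)+1) = c₀ := by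
      rw [hc₀]; push_cast; ring_nf
    rw [abs_sub_comm, hcast2]
    exact le_of_lt ht)
  rw [hcast] at hone
  rw [← hk] at h3 h4
  rw [h3, h4] at hone
  set Kc := (Finset.univ.filter (fun τ : Equiv.Perm (Fin (N+1)) =>
      τ i₀ = σ i₀ ∧ ∀ j, (τ j < τ i₀ ↔ σ j < σ i₀))).card with hKc
  have hKpos : Kc ≠ 0 := by
    rw [hKc]
    simp only [ne_eq, Finset.card_eq_zero, Finset.filter_eq_empty_iff]
    push_neg
    exact ⟨σ, Finset.mem_univ σ, rfl, fun j => Iff.rfl⟩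
  have hKne : (Kc : ℝ≥0∞) ≠ 0 := by
    simpa using hKpos
  have hKfin : (Kc : ℝ≥0∞) ≠ ⊤ := by simp
  rw [hDbad]
  have hmul : ENNReal.ofReal (1/(4*(((N:ℝ)+1)+2)*ε^2)) * ((Kc : ℝ≥0∞) * volume (Dset (N+1) σ))
      = (Kc : ℝ≥0∞) * (ENNReal.ofReal (1/(4*(((N:ℝ)+1)+2)*ε^2)) * volume (Dset (N+1) σ)) := by
    ring
  rw [hmul] at hone
  exact (ENNReal.mul_le_mul_iff_right hKne hKfin).1 hone

lemma inv_mul_le_one' (a : ℝ≥0∞) : a⁻¹ * a ≤ 1 := by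
  rcases eq_or_ne a 0 with rfl | h0
  · simp
  rcases eq_or_ne a ⊤ with rfl | ht
  · simp
  rw [ENNReal.inv_mul_cancel h0 ht]

end Stmt19Aux

open Stmt19Aux
open scoped ENNReal

/-- Under Lebesgue measure conditioned on `E_λ`, the rescaled ranks
`σ(1)/(n+1)`, `σ(n)/(n+1)` of the first and last coordinates are within `A/√(n+2)` of
`x₁`, `x_n` except with probability at most `2/A²`. -/
theorem stmt19 (n : ℕ) (hn : 2 ≤ n) (D : Finset ℕ) (hD : D ⊆ Finset.Ico 1 n)
    (A : ℝ) (hA : 0 < A) :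
    ProbabilityTheory.cond volume (Eset n D)
      {x : Fin n → ℝ |
        A / Real.sqrt (n + 2) <
          max |(stdRank n x ⟨0, by omega⟩ : ℝ) / (n + 1) - x ⟨0, by omega⟩|
            |(stdRank n x ⟨n - 1, by omega⟩ : ℝ) / (n + 1) - x ⟨n - 1, by omega⟩|} ≤
      ENNReal.ofReal (2 / A ^ 2) := by
  classical
  obtain ⟨N, rfl⟩ : ∃ N, n = N + 1 := ⟨n - 1, by omega⟩
  have hcastN : (((N+1 : ℕ)) : ℝ) = (N:ℝ)+1 := by push_cast; ring
  simp only [hcastN]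
  set ε : ℝ := A / Real.sqrt (((N:ℝ)+1) + 2) with hε_def
  have hsq_pos : (0:ℝ) < Real.sqrt (((N:ℝ)+1) + 2) := Real.sqrt_pos.2 (by positivity)
  have hε : 0 < ε := div_pos hA hsq_pos
  set c : ℝ≥0∞ := ENNReal.ofReal (1/(4*(((N:ℝ)+1)+2)*ε^2)) with hc
  set E := Eset (N+1) D with hE
  have hEmeas : MeasurableSet E := measurable_Eset (N+1) D
  set T := Finset.univ.filter (fun σ : Equiv.Perm (Fin (N+1)) =>
      ∀ i j : Fin (N+1), (j : ℕ) = (i : ℕ) + 1 →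
        ((((i : ℕ) + 1) ∈ D → σ j < σ i) ∧ (((i : ℕ) + 1) ∉ D → σ i < σ j))) with hT
  have hTmem : ∀ σ, σ ∈ T ↔ ∀ i j : Fin (N+1), (j : ℕ) = (i : ℕ) + 1 →
      ((((i : ℕ) + 1) ∈ D → σ j < σ i) ∧ (((i : ℕ) + 1) ∉ D → σ i < σ j)) := by
    intro σ; simp [hT]
  have hsubE : ∀ σ ∈ T, Dset (N+1) σ ⊆ E := by
    intro σ hσ x hx
    refine ⟨hx.1, fun i j hij => ?_⟩
    obtain ⟨ha, hb⟩ := (hTmem σ).1 hσ i j hij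
    exact ⟨fun hmem => hx.2 j i (ha hmem), fun hmem => hx.2 i j (hb hmem)⟩
  have hTdisj : (T : Set (Equiv.Perm (Fin (N+1)))).PairwiseDisjoint
      (fun σ => Dset (N+1) σ) := by
    intro τ hτ τ' hτ' hne
    refine disjoint_left.2 fun x hx hx' => hne ?_
    exact perm_eq_of_iff _ τ τ' (fun i j => by
      rw [Dset_order_iff _ τ x hx i j, Dset_order_iff _ τ' x hx' i j])
  have hsum : ∑ σ ∈ T, volume (Dset (N+1) σ) ≤ volume E := by
    rw [← measure_biUnion_finset hTdisj (fun σ _ => measurable_Dset (N+1) σ)]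
    apply measure_mono
    exact iUnion₂_subset hsubE
  -- the per-coordinate bound
  have main : ∀ i₀ : Fin (N+1),
      volume (E ∩ {x | ε < |(stdRank (N+1) x i₀ : ℝ)/(((N:ℝ)+1)+1) - x i₀|})
        ≤ c * volume E := by
    intro i₀
    have hincl : E ∩ {x | ε < |(stdRank (N+1) x i₀ : ℝ)/(((N:ℝ)+1)+1) - x i₀|} ∩ distSet (N+1)
        ⊆ ⋃ σ ∈ T, (Dset (N+1) σ ∩
            {x | ε < |(((σ i₀ : ℕ) : ℝ) + 1)/(((N:ℝ)+1)+1) - x i₀|}) := by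
      rintro x ⟨⟨hxE, hxB⟩, hxd⟩
      obtain ⟨σ, hσ⟩ := exists_stdPerm (N+1) x hxd
      have hxD : x ∈ Dset (N+1) σ := ⟨hxE.1, fun i j h => (hσ i j).1 h⟩
      have hσT : σ ∈ T := by
        rw [hTmem]
        intro i j hij
        obtain ⟨ha, hb⟩ := hxE.2 i j hij
        exact ⟨fun hmem => (hσ j i).2 (ha hmem), fun hmem => (hσ i j).2 (hb hmem)⟩
      have hrank : stdRank (N+1) x i₀ = (σ i₀ : ℕ) + 1 := stdRank_eq (N+1) σ x hσ i₀
      refine mem_biUnion hσT ⟨hxD, ?_⟩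
      show ε < |(((σ i₀ : ℕ) : ℝ) + 1)/(((N:ℝ)+1)+1) - x i₀|
      have : ((stdRank (N+1) x i₀ : ℕ) : ℝ) = ((σ i₀ : ℕ) : ℝ) + 1 := by
        rw [hrank]; push_cast; ring
      rw [← this]
      exact hxB
    calc volume (E ∩ {x | ε < |(stdRank (N+1) x i₀ : ℝ)/(((N:ℝ)+1)+1) - x i₀|})
        = volume (E ∩ {x | ε < |(stdRank (N+1) x i₀ : ℝ)/(((N:ℝ)+1)+1) - x i₀|}
            ∩ distSet (N+1)) := (measure_inter_conull (volume_distSet_compl (N+1))).symm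
      _ ≤ volume (⋃ σ ∈ T, (Dset (N+1) σ ∩
            {x | ε < |(((σ i₀ : ℕ) : ℝ) + 1)/(((N:ℝ)+1)+1) - x i₀|})) :=
          measure_mono hincl
      _ ≤ ∑ σ ∈ T, volume (Dset (N+1) σ ∩
            {x | ε < |(((σ i₀ : ℕ) : ℝ) + 1)/(((N:ℝ)+1)+1) - x i₀|}) :=
          measure_biUnion_finset_le T _
      _ ≤ ∑ σ ∈ T, c * volume (Dset (N+1) σ) :=
          Finset.sum_le_sum (fun σ _ => key N σ i₀ ε hε)
      _ = c * ∑ σ ∈ T, volume (Dset (N+1) σ) := by rw [Finset.mul_sum]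
      _ ≤ c * volume E := mul_le_mul_right hsum c
  -- conclude
  rw [ProbabilityTheory.cond_apply hEmeas]
  set i₁ : Fin (N+1) := ⟨0, by omega⟩
  set i₂ : Fin (N+1) := ⟨N+1-1, by omega⟩
  have hBsplit : E ∩ {x : Fin (N+1) → ℝ |
      ε < max |(stdRank (N+1) x i₁ : ℝ)/(((N:ℝ)+1)+1) - x i₁|
            |(stdRank (N+1) x i₂ : ℝ)/(((N:ℝ)+1)+1) - x i₂|}
      ⊆ (E ∩ {x | ε < |(stdRank (N+1) x i₁ : ℝ)/(((N:ℝ)+1)+1) - x i₁|})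
        ∪ (E ∩ {x | ε < |(stdRank (N+1) x i₂ : ℝ)/(((N:ℝ)+1)+1) - x i₂|}) := by
    rintro x ⟨hxE, hxB⟩
    simp only [mem_setOf_eq] at hxB
    rcases lt_max_iff.1 hxB with h | h
    · exact Or.inl ⟨hxE, h⟩
    · exact Or.inr ⟨hxE, h⟩
  calc (volume E)⁻¹ * volume (E ∩ {x : Fin (N+1) → ℝ |
        ε < max |(stdRank (N+1) x i₁ : ℝ)/(((N:ℝ)+1)+1) - x i₁|
              |(stdRank (N+1) x i₂ : ℝ)/(((N:ℝ)+1)+1) - x i₂|})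
      ≤ (volume E)⁻¹ * (volume (E ∩ {x | ε < |(stdRank (N+1) x i₁ : ℝ)/(((N:ℝ)+1)+1) - x i₁|})
        + volume (E ∩ {x | ε < |(stdRank (N+1) x i₂ : ℝ)/(((N:ℝ)+1)+1) - x i₂|})) :=
        mul_le_mul_right ((measure_mono hBsplit).trans (measure_union_le _ _)) _
    _ ≤ (volume E)⁻¹ * (c * volume E + c * volume E) :=
        mul_le_mul_right (add_le_add (main i₁) (main i₂)) _
    _ = (c + c) * ((volume E)⁻¹ * volume E) := by ring
    _ ≤ (c + c) * 1 := mul_le_mul_right (inv_mul_le_one' _) _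
    _ = c + c := mul_one _
    _ ≤ ENNReal.ofReal (2 / A ^ 2) := by
        rw [hc, ← ENNReal.ofReal_add (by positivity) (by positivity)]
        apply ENNReal.ofReal_le_ofReal
        have hε2 : (((N:ℝ)+1)+2) * ε^2 = A^2 := by
          rw [hε_def, div_pow, Real.sq_sqrt (by positivity : (0:ℝ) ≤ ((N:ℝ)+1)+2)]
          field_simp
        rw [show 4*(((N:ℝ)+1)+2)*ε^2 = 4*((((N:ℝ)+1)+2)*ε^2) from by ring, hε2]
        rw [← add_div, div_le_div_iff₀ (by positivity) (by positivity)]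
        nlinarith [sq_nonneg A, hA]
  done

end
end
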